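/- arXiv:2103.01473 — 7 statements merged into one kernel-verified Lean document; each statement's English description precedes it below -/
import Mathlib

section
/- Suppose cos θ0 = sin θ0 · sin θ1. Then for every time t ∈ ℕ, the first moment of the open quantum walk satisfies E₁(t) = (2p − 1)·s0²·c1²·t, where c0 = cos θ0, s0 = sin θ0, c1 = cos θ1, s1 = sin θ1. -/
open Matrix Complex Filter

/-- Local operation `P(θ0,θ1)`. -/
noncomputable def Pmat (θ0 θ1 : ℝ) : Matrix (Fin 2) (Fin 2) ℂ :=
  !![0, (Real.cos θ0 : ℂ);
     ((Real.sin θ0 * Real.sin θ1 : ℝ) : ℂ), (-((Real.sin θ0 * Real.cos θ1 : ℝ) : ℂ))]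

/-- Local operation `Q(θ0,θ1)`. -/
noncomputable def Qmat (θ0 θ1 : ℝ) : Matrix (Fin 2) (Fin 2) ℂ :=
  !![((Real.sin θ0 * Real.cos θ1 : ℝ) : ℂ), ((Real.sin θ0 * Real.sin θ1 : ℝ) : ℂ);
     (Real.cos θ0 : ℂ), 0]

/-- The open quantum walk on ℤ with initial state `diagonal (p, 1-p)` at the origin. -/
noncomputable def owalk (θ0 θ1 p : ℝ) : ℕ → ℤ → Matrix (Fin 2) (Fin 2) ℂ
  | 0, x => if x = 0 then Matrix.diagonal ![(p : ℂ), ((1 - p : ℝ) : ℂ)] else 0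
  | t + 1, x =>
      Pmat θ0 θ1 * owalk θ0 θ1 p t (x + 1) * (Pmat θ0 θ1)ᴴ
        + Qmat θ0 θ1 * owalk θ0 θ1 p t (x - 1) * (Qmat θ0 θ1)ᴴ

/-- Finding probability at position `x` at time `t`. -/
noncomputable def findprob (θ0 θ1 p : ℝ) (t : ℕ) (x : ℤ) : ℝ :=
  ((owalk θ0 θ1 p t x).trace).re

/-- First moment (finite sum: the walk vanishes outside `[-t, t]`). -/
noncomputable def moment1 (θ0 θ1 p : ℝ) (t : ℕ) : ℝ :=
  ∑ x ∈ Finset.Icc (-(t : ℤ)) (t : ℤ), (x : ℝ) * findprob θ0 θ1 p t x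

/-- Second moment. -/
noncomputable def moment2 (θ0 θ1 p : ℝ) (t : ℕ) : ℝ :=
  ∑ x ∈ Finset.Icc (-(t : ℤ)) (t : ℤ), (x : ℝ) ^ 2 * findprob θ0 θ1 p t x

/-- Standard deviation. -/
noncomputable def stdDev (θ0 θ1 p : ℝ) (t : ℕ) : ℝ :=
  Real.sqrt (moment2 θ0 θ1 p t - (moment1 θ0 θ1 p t) ^ 2)

/-! ### Auxiliary material -/

/-- The "displacement observable" `QᴴQ - PᴴP`. -/
noncomputable def Mmat (θ0 θ1 : ℝ) : Matrix (Fin 2) (Fin 2) ℂ :=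
  (Qmat θ0 θ1)ᴴ * Qmat θ0 θ1 - (Pmat θ0 θ1)ᴴ * Pmat θ0 θ1

/-- Sum of all the states at time `t`. -/
noncomputable def Ssum (θ0 θ1 p : ℝ) (t : ℕ) : Matrix (Fin 2) (Fin 2) ℂ :=
  ∑ x ∈ Finset.Icc (-(t : ℤ)) (t : ℤ), owalk θ0 θ1 p t x

lemma owalk_eq_zero (θ0 θ1 p : ℝ) :
    ∀ (t : ℕ) (x : ℤ), ((t : ℤ) < x ∨ x < -(t : ℤ)) → owalk θ0 θ1 p t x = 0 := by
  intro t
  induction t with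
  | zero =>
      intro x hx
      have : x ≠ 0 := by omega
      simp [owalk, this]
  | succ t ih =>
      intro x hx
      have h1 : owalk θ0 θ1 p t (x + 1) = 0 := ih _ (by push_cast at hx ⊢; omega)
      have h2 : owalk θ0 θ1 p t (x - 1) = 0 := ih _ (by push_cast at hx ⊢; omega)
      simp [owalk, h1, h2]

lemma sum_shift {E : Type*} [AddCommMonoid E] (a b c : ℤ) (f g : ℤ → E)
    (hfg : ∀ x, f x = g (x + c)) :
    ∑ x ∈ Finset.Icc a b, f x = ∑ y ∈ Finset.Icc (a + c) (b + c), g y := by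
  rw [← Finset.map_add_right_Icc, Finset.sum_map]
  exact Finset.sum_congr rfl fun x _ => by rw [hfg]; rfl

lemma sum_trunc {E : Type*} [AddCommMonoid E] (θ0 θ1 p : ℝ) (t : ℕ) (a b : ℤ)
    (ha : a ≤ -(t : ℤ)) (hb : (t : ℤ) ≤ b)
    (g : ℤ → Matrix (Fin 2) (Fin 2) ℂ → E) (hg : ∀ x, g x 0 = 0) :
    ∑ x ∈ Finset.Icc a b, g x (owalk θ0 θ1 p t x)
      = ∑ x ∈ Finset.Icc (-(t : ℤ)) (t : ℤ), g x (owalk θ0 θ1 p t x) := by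
  refine (Finset.sum_subset (Finset.Icc_subset_Icc ha hb) ?_).symm
  intro x hx hnx
  simp only [Finset.mem_Icc] at hx hnx
  rw [owalk_eq_zero θ0 θ1 p t x (by omega), hg]

section identities

variable (θ0 θ1 : ℝ)

lemma K1 : (Pmat θ0 θ1)ᴴ * Pmat θ0 θ1 + (Qmat θ0 θ1)ᴴ * Qmat θ0 θ1 = 1 := by
  have hg1 : (Real.sin θ0 : ℂ) ^ 2 + (Real.cos θ0 : ℂ) ^ 2 = 1 := by
    exact_mod_cast congrArg (Complex.ofReal ·) (Real.sin_sq_add_cos_sq θ0)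
  have hg2 : (Real.sin θ1 : ℂ) ^ 2 + (Real.cos θ1 : ℂ) ^ 2 = 1 := by
    exact_mod_cast congrArg (Complex.ofReal ·) (Real.sin_sq_add_cos_sq θ1)
  ext i j
  fin_cases i <;> fin_cases j <;>
    · simp [Pmat, Qmat, Matrix.mul_apply, Fin.sum_univ_two, Matrix.conjTranspose_apply,
        Matrix.one_apply, Complex.star_def, _root_.map_mul, map_neg, Complex.conj_ofReal,
        Complex.ofReal_mul, -Complex.ofReal_sin, -Complex.ofReal_cos]
      first
      | ring1
      | linear_combination (Real.sin θ0 : ℂ) ^ 2 * hg2 + hg1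
      | linear_combination -((Real.sin θ0 : ℂ) ^ 2 * hg2) - hg1

lemma K2 (h : Real.cos θ0 = Real.sin θ0 * Real.sin θ1) :
    (Pmat θ0 θ1)ᴴ * Mmat θ0 θ1 * Pmat θ0 θ1 + (Qmat θ0 θ1)ᴴ * Mmat θ0 θ1 * Qmat θ0 θ1
      = Mmat θ0 θ1 := by
  have hc : (Real.cos θ0 : ℂ) = (Real.sin θ0 : ℂ) * (Real.sin θ1 : ℂ) := by
    exact_mod_cast congrArg (Complex.ofReal ·) h
  have hg1 : (Real.sin θ0 : ℂ) ^ 2 + (Real.cos θ0 : ℂ) ^ 2 = 1 := by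
    exact_mod_cast congrArg (Complex.ofReal ·) (Real.sin_sq_add_cos_sq θ0)
  have hg2 : (Real.sin θ1 : ℂ) ^ 2 + (Real.cos θ1 : ℂ) ^ 2 = 1 := by
    exact_mod_cast congrArg (Complex.ofReal ·) (Real.sin_sq_add_cos_sq θ1)
  rw [hc] at hg1
  set s0 : ℂ := (Real.sin θ0 : ℂ)
  set s1 : ℂ := (Real.sin θ1 : ℂ)
  set c1 : ℂ := (Real.cos θ1 : ℂ)
  ext i j
  fin_cases i <;> fin_cases j <;>
    · simp [Mmat, Pmat, Qmat, Matrix.mul_apply, Fin.sum_univ_two, Matrix.conjTranspose_apply,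
        Complex.star_def, _root_.map_mul, map_neg, Complex.conj_ofReal,
        Complex.ofReal_mul, -Complex.ofReal_sin, -Complex.ofReal_cos]
      rw [hc]
      ring_nf
      try linear_combination (s0 ^ 4 * c1 ^ 2) * hg2 + (s0 ^ 2 * c1 ^ 2) * hg1
      try linear_combination (2 * s0 ^ 4 * s1 * c1) * hg2 + (2 * s0 ^ 2 * s1 * c1) * hg1
      try linear_combination (-(s0 ^ 4 * c1 ^ 2)) * hg2 + (-(s0 ^ 2 * c1 ^ 2)) * hg1

end identities

lemma Ssum_succ (θ0 θ1 p : ℝ) (t : ℕ) :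
    Ssum θ0 θ1 p (t + 1)
      = Pmat θ0 θ1 * Ssum θ0 θ1 p t * (Pmat θ0 θ1)ᴴ
        + Qmat θ0 θ1 * Ssum θ0 θ1 p t * (Qmat θ0 θ1)ᴴ := by
  have hP : ∑ x ∈ Finset.Icc (-(t : ℤ) - 1) ((t : ℤ) + 1),
      Pmat θ0 θ1 * owalk θ0 θ1 p t (x + 1) * (Pmat θ0 θ1)ᴴ
      = Pmat θ0 θ1 * Ssum θ0 θ1 p t * (Pmat θ0 θ1)ᴴ := by
    rw [sum_shift (-(t : ℤ) - 1) ((t : ℤ) + 1) 1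
      (fun x => Pmat θ0 θ1 * owalk θ0 θ1 p t (x + 1) * (Pmat θ0 θ1)ᴴ)
      (fun y => Pmat θ0 θ1 * owalk θ0 θ1 p t y * (Pmat θ0 θ1)ᴴ) (fun x => rfl)]
    rw [sum_trunc θ0 θ1 p t _ _ (by omega) (by omega)
      (fun x m => Pmat θ0 θ1 * m * (Pmat θ0 θ1)ᴴ) (fun x => by simp)]
    rw [Ssum, Finset.mul_sum, Finset.sum_mul]
  have hQ : ∑ x ∈ Finset.Icc (-(t : ℤ) - 1) ((t : ℤ) + 1),
      Qmat θ0 θ1 * owalk θ0 θ1 p t (x - 1) * (Qmat θ0 θ1)ᴴ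
      = Qmat θ0 θ1 * Ssum θ0 θ1 p t * (Qmat θ0 θ1)ᴴ := by
    rw [sum_shift (-(t : ℤ) - 1) ((t : ℤ) + 1) (-1)
      (fun x => Qmat θ0 θ1 * owalk θ0 θ1 p t (x - 1) * (Qmat θ0 θ1)ᴴ)
      (fun y => Qmat θ0 θ1 * owalk θ0 θ1 p t y * (Qmat θ0 θ1)ᴴ)
      (fun x => by norm_num [sub_eq_add_neg])]
    rw [sum_trunc θ0 θ1 p t _ _ (by omega) (by omega)
      (fun x m => Qmat θ0 θ1 * m * (Qmat θ0 θ1)ᴴ) (fun x => by simp)]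
    rw [Ssum, Finset.mul_sum, Finset.sum_mul]
  rw [← hP, ← hQ, Ssum, ← Finset.sum_add_distrib]
  have hb : (-(((t : ℕ) + 1 : ℕ) : ℤ)) = -(t : ℤ) - 1 := by push_cast; ring
  have hb' : ((((t : ℕ) + 1 : ℕ)) : ℤ) = (t : ℤ) + 1 := by push_cast; ring
  rw [hb, hb']
  exact Finset.sum_congr rfl fun x _ => by rw [owalk]

lemma trace_M_Ssum (θ0 θ1 p : ℝ) (h : Real.cos θ0 = Real.sin θ0 * Real.sin θ1) (t : ℕ) :
    ((Mmat θ0 θ1 * Ssum θ0 θ1 p t).trace).re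
      = (2 * p - 1) * Real.sin θ0 ^ 2 * Real.cos θ1 ^ 2 := by
  have hc : (Real.cos θ0 : ℂ) = (Real.sin θ0 : ℂ) * (Real.sin θ1 : ℂ) := by
    exact_mod_cast congrArg (Complex.ofReal ·) h
  induction t with
  | zero =>
      have h0 : Ssum θ0 θ1 p 0 = Matrix.diagonal ![(p : ℂ), ((1 - p : ℝ) : ℂ)] := by
        simp [Ssum, owalk]
      rw [h0]
      have htr : (Mmat θ0 θ1 * Matrix.diagonal ![(p : ℂ), ((1 - p : ℝ) : ℂ)]).trace
          = (((2 * p - 1) * Real.sin θ0 ^ 2 * Real.cos θ1 ^ 2 : ℝ) : ℂ) := by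
        simp [Mmat, Pmat, Qmat, Matrix.trace, Matrix.diag, Matrix.mul_apply,
          Fin.sum_univ_two, Matrix.conjTranspose_apply, Matrix.diagonal_apply,
          Complex.star_def, Complex.conj_ofReal, Complex.ofReal_mul, Complex.ofReal_sub,
          Complex.ofReal_pow, Complex.ofReal_one, Complex.ofReal_ofNat,
          -Complex.ofReal_sin, -Complex.ofReal_cos]
        rw [hc]
        ring
      rw [htr, Complex.ofReal_re]
  | succ t ih =>
      have e : (Mmat θ0 θ1 * Ssum θ0 θ1 p (t + 1)).trace
          = (Mmat θ0 θ1 * Ssum θ0 θ1 p t).trace := by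
        rw [Ssum_succ, mul_add, Matrix.trace_add,
          ← mul_assoc (Mmat θ0 θ1) (Pmat θ0 θ1 * Ssum θ0 θ1 p t) ((Pmat θ0 θ1)ᴴ),
          ← mul_assoc (Mmat θ0 θ1) (Qmat θ0 θ1 * Ssum θ0 θ1 p t) ((Qmat θ0 θ1)ᴴ),
          Matrix.trace_mul_cycle (Mmat θ0 θ1) (Pmat θ0 θ1 * Ssum θ0 θ1 p t) ((Pmat θ0 θ1)ᴴ),
          Matrix.trace_mul_cycle (Mmat θ0 θ1) (Qmat θ0 θ1 * Ssum θ0 θ1 p t) ((Qmat θ0 θ1)ᴴ),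
          show (Pmat θ0 θ1)ᴴ * Mmat θ0 θ1 * (Pmat θ0 θ1 * Ssum θ0 θ1 p t)
            = ((Pmat θ0 θ1)ᴴ * Mmat θ0 θ1 * Pmat θ0 θ1) * Ssum θ0 θ1 p t by
              rw [mul_assoc, mul_assoc, mul_assoc],
          show (Qmat θ0 θ1)ᴴ * Mmat θ0 θ1 * (Qmat θ0 θ1 * Ssum θ0 θ1 p t)
            = ((Qmat θ0 θ1)ᴴ * Mmat θ0 θ1 * Qmat θ0 θ1) * Ssum θ0 θ1 p t by
              rw [mul_assoc, mul_assoc, mul_assoc],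
          ← Matrix.trace_add, ← Matrix.add_mul, K2 θ0 θ1 h]
      rw [e, ih]

lemma pointwise (θ0 θ1 : ℝ) (ρ : Matrix (Fin 2) (Fin 2) ℂ) (r : ℝ) :
    (r - 1) * ((Pmat θ0 θ1 * ρ * (Pmat θ0 θ1)ᴴ).trace).re
      + (r + 1) * ((Qmat θ0 θ1 * ρ * (Qmat θ0 θ1)ᴴ).trace).re
    = r * (ρ.trace).re + ((Mmat θ0 θ1 * ρ).trace).re := by
  have hP : (Pmat θ0 θ1 * ρ * (Pmat θ0 θ1)ᴴ).trace
      = ((Pmat θ0 θ1)ᴴ * Pmat θ0 θ1 * ρ).trace :=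
    Matrix.trace_mul_cycle (Pmat θ0 θ1) ρ ((Pmat θ0 θ1)ᴴ)
  have hQ : (Qmat θ0 θ1 * ρ * (Qmat θ0 θ1)ᴴ).trace
      = ((Qmat θ0 θ1)ᴴ * Qmat θ0 θ1 * ρ).trace :=
    Matrix.trace_mul_cycle (Qmat θ0 θ1) ρ ((Qmat θ0 θ1)ᴴ)
  have h1 : (((Pmat θ0 θ1)ᴴ * Pmat θ0 θ1 * ρ).trace).re
      + (((Qmat θ0 θ1)ᴴ * Qmat θ0 θ1 * ρ).trace).re = (ρ.trace).re := by
    rw [← Complex.add_re, ← Matrix.trace_add, ← Matrix.add_mul, K1, Matrix.one_mul]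
  have h2 : (((Qmat θ0 θ1)ᴴ * Qmat θ0 θ1 * ρ).trace).re
      - (((Pmat θ0 θ1)ᴴ * Pmat θ0 θ1 * ρ).trace).re = ((Mmat θ0 θ1 * ρ).trace).re := by
    rw [← Complex.sub_re, ← Matrix.trace_sub, ← Matrix.sub_mul, Mmat]
  rw [hP, hQ, ← h1, ← h2]
  ring

lemma moment1_succ (θ0 θ1 p : ℝ) (t : ℕ) :
    moment1 θ0 θ1 p (t + 1)
      = moment1 θ0 θ1 p t + ((Mmat θ0 θ1 * Ssum θ0 θ1 p t).trace).re := by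
  have hP : ∑ x ∈ Finset.Icc (-(t : ℤ) - 1) ((t : ℤ) + 1),
      (x : ℝ) * ((Pmat θ0 θ1 * owalk θ0 θ1 p t (x + 1) * (Pmat θ0 θ1)ᴴ).trace).re
      = ∑ y ∈ Finset.Icc (-(t : ℤ)) (t : ℤ),
        ((y : ℝ) - 1) * ((Pmat θ0 θ1 * owalk θ0 θ1 p t y * (Pmat θ0 θ1)ᴴ).trace).re := by
    rw [sum_shift (-(t : ℤ) - 1) ((t : ℤ) + 1) 1
      (fun x => (x : ℝ) * ((Pmat θ0 θ1 * owalk θ0 θ1 p t (x + 1) * (Pmat θ0 θ1)ᴴ).trace).re)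
      (fun y => ((y : ℝ) - 1) * ((Pmat θ0 θ1 * owalk θ0 θ1 p t y * (Pmat θ0 θ1)ᴴ).trace).re)
      (fun x => by push_cast; ring)]
    rw [sum_trunc θ0 θ1 p t _ _ (by omega) (by omega)
      (fun x m => ((x : ℝ) - 1) * ((Pmat θ0 θ1 * m * (Pmat θ0 θ1)ᴴ).trace).re)
      (fun x => by simp)]
  have hQ : ∑ x ∈ Finset.Icc (-(t : ℤ) - 1) ((t : ℤ) + 1),
      (x : ℝ) * ((Qmat θ0 θ1 * owalk θ0 θ1 p t (x - 1) * (Qmat θ0 θ1)ᴴ).trace).re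
      = ∑ y ∈ Finset.Icc (-(t : ℤ)) (t : ℤ),
        ((y : ℝ) + 1) * ((Qmat θ0 θ1 * owalk θ0 θ1 p t y * (Qmat θ0 θ1)ᴴ).trace).re := by
    rw [sum_shift (-(t : ℤ) - 1) ((t : ℤ) + 1) (-1)
      (fun x => (x : ℝ) * ((Qmat θ0 θ1 * owalk θ0 θ1 p t (x - 1) * (Qmat θ0 θ1)ᴴ).trace).re)
      (fun y => ((y : ℝ) + 1) * ((Qmat θ0 θ1 * owalk θ0 θ1 p t y * (Qmat θ0 θ1)ᴴ).trace).re)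
      (fun x => by rw [show x + -1 = x - 1 by ring]; push_cast; ring)]
    rw [sum_trunc θ0 θ1 p t _ _ (by omega) (by omega)
      (fun x m => ((x : ℝ) + 1) * ((Qmat θ0 θ1 * m * (Qmat θ0 θ1)ᴴ).trace).re)
      (fun x => by simp)]
  have hM : ((Mmat θ0 θ1 * Ssum θ0 θ1 p t).trace).re
      = ∑ y ∈ Finset.Icc (-(t : ℤ)) (t : ℤ),
          ((Mmat θ0 θ1 * owalk θ0 θ1 p t y).trace).re := by
    rw [Ssum, Finset.mul_sum, Matrix.trace_sum, Complex.re_sum]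
  have hb : (-(((t : ℕ) + 1 : ℕ) : ℤ)) = -(t : ℤ) - 1 := by push_cast; ring
  have hb' : ((((t : ℕ) + 1 : ℕ)) : ℤ) = (t : ℤ) + 1 := by push_cast; ring
  have expand : moment1 θ0 θ1 p (t + 1)
      = ∑ x ∈ Finset.Icc (-(t : ℤ) - 1) ((t : ℤ) + 1),
          ((x : ℝ) * ((Pmat θ0 θ1 * owalk θ0 θ1 p t (x + 1) * (Pmat θ0 θ1)ᴴ).trace).re
            + (x : ℝ) * ((Qmat θ0 θ1 * owalk θ0 θ1 p t (x - 1) * (Qmat θ0 θ1)ᴴ).trace).re) := by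
    rw [moment1, hb, hb']
    refine Finset.sum_congr rfl fun x _ => ?_
    rw [findprob, owalk, Matrix.trace_add, Complex.add_re, mul_add]
  rw [expand, Finset.sum_add_distrib, hP, hQ, hM, moment1, ← Finset.sum_add_distrib,
    ← Finset.sum_add_distrib]
  refine Finset.sum_congr rfl fun y _ => ?_
  rw [findprob]
  exact pointwise θ0 θ1 (owalk θ0 θ1 p t y) (y : ℝ)

theorem owalk_moment1_eq (θ0 θ1 p : ℝ) (hp0 : 0 ≤ p) (hp1 : p ≤ 1)
    (h : Real.cos θ0 = Real.sin θ0 * Real.sin θ1) :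
    ∀ t : ℕ, moment1 θ0 θ1 p t =
      (2 * p - 1) * Real.sin θ0 ^ 2 * Real.cos θ1 ^ 2 * t := by
  intro t
  induction t with
  | zero => simp [moment1]
  | succ t ih =>
      rw [moment1_succ, ih, trace_M_Ssum θ0 θ1 p h]
      push_cast
      ring
end

section
/- Suppose cos θ0 = sin θ0 · sin θ1. Then for every time t ∈ ℕ, the second moment of the open quantum walk satisfies E₂(t) = s0⁴·c1²·(1 + 3·s1²)·t² + s0²·(1 + s1² − s0²·c1²·(1 + 3·s1²))·t, where c0 = cos θ0, s0 = sin θ0, c1 = cos θ1, s1 = sin θ1. -/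
open Matrix Complex Filter

lemma owalk_support (θ0 θ1 p : ℝ) : ∀ (t : ℕ) (x : ℤ), (t : ℤ) < |x| → owalk θ0 θ1 p t x = 0 := by
  intro t
  induction t with
  | zero =>
    intro x hx
    have : x ≠ 0 := by
      intro h; rw [h] at hx; simp at hx
    simp [owalk, this]
  | succ t ih =>
    intro x hx
    have h1 : owalk θ0 θ1 p t (x + 1) = 0 := by
      apply ih
      rcases abs_cases x with ⟨h1, h2⟩ | ⟨h1, h2⟩ <;> rcases abs_cases (x+1) with ⟨h3,h4⟩|⟨h3,h4⟩ <;> omega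
    have h2 : owalk θ0 θ1 p t (x - 1) = 0 := by
      apply ih
      rcases abs_cases x with ⟨h1, h2⟩ | ⟨h1, h2⟩ <;> rcases abs_cases (x-1) with ⟨h3,h4⟩|⟨h3,h4⟩ <;> omega
    show Pmat θ0 θ1 * owalk θ0 θ1 p t (x + 1) * (Pmat θ0 θ1)ᴴ
        + Qmat θ0 θ1 * owalk θ0 θ1 p t (x - 1) * (Qmat θ0 θ1)ᴴ = 0
    rw [h1, h2]
    simp

noncomputable def Wsum (θ0 θ1 p : ℝ) (f : ℤ → ℂ) (t : ℕ) : Matrix (Fin 2) (Fin 2) ℂ :=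
  ∑ x ∈ Finset.Icc (-(t : ℤ)) (t : ℤ), f x • owalk θ0 θ1 p t x

lemma Wsum_succ (θ0 θ1 p : ℝ) (f : ℤ → ℂ) (t : ℕ) :
    Wsum θ0 θ1 p f (t + 1) =
      Pmat θ0 θ1 * Wsum θ0 θ1 p (fun y => f (y - 1)) t * (Pmat θ0 θ1)ᴴ
        + Qmat θ0 θ1 * Wsum θ0 θ1 p (fun y => f (y + 1)) t * (Qmat θ0 θ1)ᴴ := by
  have key : ∀ (c : ℤ), c = 1 ∨ c = -1 → ∀ (M N : Matrix (Fin 2) (Fin 2) ℂ),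
      (∑ x ∈ Finset.Icc (-(t:ℤ) - 1) ((t:ℤ) + 1), f x • (M * owalk θ0 θ1 p t (x + c) * N)) =
      M * (∑ y ∈ Finset.Icc (-(t:ℤ)) (t:ℤ), f (y - c) • owalk θ0 θ1 p t y) * N := by
    intro c hc M N
    rw [Finset.mul_sum, Finset.sum_mul]
    have reind : (∑ x ∈ Finset.Icc (-(t:ℤ) - 1) ((t:ℤ) + 1), f x • (M * owalk θ0 θ1 p t (x + c) * N)) =
        ∑ y ∈ Finset.Icc (-(t:ℤ) - 1 + c) ((t:ℤ) + 1 + c), f (y - c) • (M * owalk θ0 θ1 p t y * N) := by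
      rw [← Finset.map_add_right_Icc, Finset.sum_map]
      simp [addRightEmbedding]
    rw [reind]
    rw [Finset.sum_subset (Finset.Icc_subset_Icc (by omega) (by omega) :
        Finset.Icc (-(t:ℤ)) (t:ℤ) ⊆ Finset.Icc (-(t:ℤ) - 1 + c) ((t:ℤ) + 1 + c))]
    · apply Finset.sum_congr rfl
      intro x _
      simp only [smul_mul_assoc, mul_smul_comm]
    · intro x hx hx'
      simp only [Finset.mem_Icc] at hx hx'
      rcases hc with rfl | rfl
      all_goals {
        have : owalk θ0 θ1 p t x = 0 := by
          apply owalk_support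
          rcases abs_cases x with ⟨h1,h2⟩|⟨h1,h2⟩ <;> omega
        rw [this]; simp }
  show (∑ x ∈ Finset.Icc (-((t:ℤ)+1)) ((t:ℤ)+1), f x • owalk θ0 θ1 p (t+1) x) = _
  have expand : (∑ x ∈ Finset.Icc (-((t:ℤ)+1)) ((t:ℤ)+1), f x • owalk θ0 θ1 p (t+1) x)
      = (∑ x ∈ Finset.Icc (-(t:ℤ) - 1) ((t:ℤ) + 1),
          f x • (Pmat θ0 θ1 * owalk θ0 θ1 p t (x + 1) * (Pmat θ0 θ1)ᴴ))
        + (∑ x ∈ Finset.Icc (-(t:ℤ) - 1) ((t:ℤ) + 1),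
          f x • (Qmat θ0 θ1 * owalk θ0 θ1 p t (x + -1) * (Qmat θ0 θ1)ᴴ)) := by
    rw [← Finset.sum_add_distrib]
    apply Finset.sum_congr (by congr 1; ring)
    intro x _
    rw [← smul_add]
    rfl
  rw [expand, key 1 (Or.inl rfl), key (-1) (Or.inr rfl)]
  unfold Wsum
  norm_num [mul_assoc]

lemma Wsum_congr (θ0 θ1 p : ℝ) (f g : ℤ → ℂ) (t : ℕ) (hfg : ∀ x, f x = g x) :
    Wsum θ0 θ1 p f t = Wsum θ0 θ1 p g t := by
  unfold Wsum; exact Finset.sum_congr rfl fun x _ => by rw [hfg]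

lemma Wsum_add (θ0 θ1 p : ℝ) (f g : ℤ → ℂ) (t : ℕ) :
    Wsum θ0 θ1 p (fun y => f y + g y) t = Wsum θ0 θ1 p f t + Wsum θ0 θ1 p g t := by
  unfold Wsum; rw [← Finset.sum_add_distrib]
  exact Finset.sum_congr rfl fun x _ => add_smul _ _ _

lemma Wsum_smul (θ0 θ1 p : ℝ) (c : ℂ) (f : ℤ → ℂ) (t : ℕ) :
    Wsum θ0 θ1 p (fun y => c * f y) t = c • Wsum θ0 θ1 p f t := by
  unfold Wsum; rw [Finset.smul_sum]
  exact Finset.sum_congr rfl fun x _ => mul_smul _ _ _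

lemma Wsum_zero (θ0 θ1 p : ℝ) (f : ℤ → ℂ) :
    Wsum θ0 θ1 p f 0 = f 0 • Matrix.diagonal ![(p : ℂ), ((1 - p : ℝ) : ℂ)] := by
  unfold Wsum
  norm_num
  rw [show owalk θ0 θ1 p 0 0 = Matrix.diagonal ![(p : ℂ), ((1 - p : ℝ) : ℂ)] from by rw [owalk]; simp]
  push_cast
  rfl

set_option maxHeartbeats 2000000 in
lemma keyInd (θ0 θ1 p s u : ℝ)
    (hP : Pmat θ0 θ1 = !![(0:ℂ), (s:ℂ); (s:ℂ), -(u:ℂ)])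
    (hQ : Qmat θ0 θ1 = !![(u:ℂ), (s:ℂ); (s:ℂ), 0])
    (hu : 2*s^2 + u^2 = 1) :
    ∀ t : ℕ, ∃ k A B : ℝ,
      Wsum θ0 θ1 p (fun _ => 1) t
        = !![((p + 2*s^2*k : ℝ) : ℂ), ((-(s*u*k) : ℝ) : ℂ);
             ((-(s*u*k) : ℝ) : ℂ), ((1 - p - 2*s^2*k : ℝ) : ℂ)] ∧
      Wsum θ0 θ1 p (fun y => (y:ℂ)) t
        = !![(((t:ℝ)*(p*(1-2*s^2)) : ℝ) : ℂ), (((t:ℝ)*(s*u) : ℝ) : ℂ);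
             (((t:ℝ)*(s*u) : ℝ) : ℂ), (((t:ℝ)*((p-1)*(1-2*s^2)) : ℝ) : ℂ)] ∧
      Wsum θ0 θ1 p (fun y => (y:ℂ)^2) t
        = !![((A:ℝ):ℂ), ((B:ℝ):ℂ);
             ((B:ℝ):ℂ), (((t:ℝ)^2 - 4*s^4*(t:ℝ)*((t:ℝ)-1) - A : ℝ):ℂ)] := by
  have huC : 2*(s:ℂ)^2 + (u:ℂ)^2 = 1 := by exact_mod_cast hu
  have hPH : (!![(0:ℂ), (s:ℂ); (s:ℂ), -(u:ℂ)])ᴴ = !![(0:ℂ), (s:ℂ); (s:ℂ), -(u:ℂ)] := by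
    ext i j; fin_cases i <;> fin_cases j <;> simp [Matrix.conjTranspose_apply]
  have hQH : (!![(u:ℂ), (s:ℂ); (s:ℂ), 0])ᴴ = !![(u:ℂ), (s:ℂ); (s:ℂ), 0] := by
    ext i j; fin_cases i <;> fin_cases j <;> simp [Matrix.conjTranspose_apply]
  intro t
  induction t with
  | zero =>
    refine ⟨0, 0, 0, ?_, ?_, ?_⟩ <;>
      · rw [Wsum_zero]; ext i j; fin_cases i <;> fin_cases j <;>
          simp [Matrix.diagonal] <;> push_cast <;> ring
  | succ t ih =>
    obtain ⟨k, A, B, h0, h1, h2⟩ := ih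
    have entry : ∀ (X Y : Matrix (Fin 2) (Fin 2) ℂ) (x11 x12 x21 x22 y11 y12 y21 y22 : ℂ),
        X = !![x11, x12; x21, x22] → Y = !![y11, y12; y21, y22] →
        X + Y = !![x11 + y11, x12 + y12; x21 + y21, x22 + y22] := by
      intro X Y x11 x12 x21 x22 y11 y12 y21 y22 hX hY
      subst hX; subst hY
      ext i j; fin_cases i <;> fin_cases j <;> simp
    have D1 : Wsum θ0 θ1 p (fun y => ((y - 1 : ℤ) : ℂ)) t
        = !![((t:ℝ)*(p*(1-2*s^2)) : ℂ) - ((p + 2*s^2*k : ℝ) : ℂ), ((t:ℝ)*(s*u) : ℂ) - ((-(s*u*k) : ℝ):ℂ);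
             ((t:ℝ)*(s*u) : ℂ) - ((-(s*u*k) : ℝ):ℂ), ((t:ℝ)*((p-1)*(1-2*s^2)) : ℂ) - ((1 - p - 2*s^2*k : ℝ):ℂ)] := by
      have : Wsum θ0 θ1 p (fun y => ((y - 1 : ℤ) : ℂ)) t
          = Wsum θ0 θ1 p (fun y => (y:ℂ)) t + (-1 : ℂ) • Wsum θ0 θ1 p (fun _ => 1) t := by
        rw [← Wsum_smul, ← Wsum_add]
        exact Wsum_congr _ _ _ _ _ _ (fun x => by push_cast; ring)
      rw [this, h0, h1]
      ext i j; fin_cases i <;> fin_cases j <;>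
        simp [Matrix.add_apply, Matrix.smul_apply, smul_eq_mul] <;> push_cast <;> ring
    have D2 : Wsum θ0 θ1 p (fun y => ((y + 1 : ℤ) : ℂ)) t
        = !![((t:ℝ)*(p*(1-2*s^2)) : ℂ) + ((p + 2*s^2*k : ℝ) : ℂ), ((t:ℝ)*(s*u) : ℂ) + ((-(s*u*k) : ℝ):ℂ);
             ((t:ℝ)*(s*u) : ℂ) + ((-(s*u*k) : ℝ):ℂ), ((t:ℝ)*((p-1)*(1-2*s^2)) : ℂ) + ((1 - p - 2*s^2*k : ℝ):ℂ)] := by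
      have : Wsum θ0 θ1 p (fun y => ((y + 1 : ℤ) : ℂ)) t
          = Wsum θ0 θ1 p (fun y => (y:ℂ)) t + (1 : ℂ) • Wsum θ0 θ1 p (fun _ => 1) t := by
        rw [← Wsum_smul, ← Wsum_add]
        exact Wsum_congr _ _ _ _ _ _ (fun x => by push_cast; ring)
      rw [this, h0, h1]
      ext i j; fin_cases i <;> fin_cases j <;>
        simp [Matrix.add_apply, Matrix.smul_apply, smul_eq_mul] <;> push_cast <;> ring
    have D3 : Wsum θ0 θ1 p (fun y => ((y - 1 : ℤ) : ℂ)^2) t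
        = !![((A:ℝ):ℂ) - 2*((t:ℝ)*(p*(1-2*s^2)) : ℂ) + ((p + 2*s^2*k : ℝ) : ℂ),
             ((B:ℝ):ℂ) - 2*((t:ℝ)*(s*u) : ℂ) + ((-(s*u*k) : ℝ):ℂ);
             ((B:ℝ):ℂ) - 2*((t:ℝ)*(s*u) : ℂ) + ((-(s*u*k) : ℝ):ℂ),
             (((t:ℝ)^2 - 4*s^4*(t:ℝ)*((t:ℝ)-1) - A : ℝ):ℂ) - 2*((t:ℝ)*((p-1)*(1-2*s^2)) : ℂ) + ((1 - p - 2*s^2*k : ℝ):ℂ)] := by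
      have : Wsum θ0 θ1 p (fun y => ((y - 1 : ℤ) : ℂ)^2) t
          = Wsum θ0 θ1 p (fun y => (y:ℂ)^2) t + ((-2 : ℂ) • Wsum θ0 θ1 p (fun y => (y:ℂ)) t
            + (1:ℂ) • Wsum θ0 θ1 p (fun _ => 1) t) := by
        rw [← Wsum_smul, ← Wsum_smul, ← Wsum_add, ← Wsum_add]
        exact Wsum_congr _ _ _ _ _ _ (fun x => by push_cast; ring)
      rw [this, h0, h1, h2]
      ext i j; fin_cases i <;> fin_cases j <;>
        simp [Matrix.add_apply, Matrix.smul_apply, smul_eq_mul] <;> push_cast <;> ring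
    have D4 : Wsum θ0 θ1 p (fun y => ((y + 1 : ℤ) : ℂ)^2) t
        = !![((A:ℝ):ℂ) + 2*((t:ℝ)*(p*(1-2*s^2)) : ℂ) + ((p + 2*s^2*k : ℝ) : ℂ),
             ((B:ℝ):ℂ) + 2*((t:ℝ)*(s*u) : ℂ) + ((-(s*u*k) : ℝ):ℂ);
             ((B:ℝ):ℂ) + 2*((t:ℝ)*(s*u) : ℂ) + ((-(s*u*k) : ℝ):ℂ),
             (((t:ℝ)^2 - 4*s^4*(t:ℝ)*((t:ℝ)-1) - A : ℝ):ℂ) + 2*((t:ℝ)*((p-1)*(1-2*s^2)) : ℂ) + ((1 - p - 2*s^2*k : ℝ):ℂ)] := by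
      have : Wsum θ0 θ1 p (fun y => ((y + 1 : ℤ) : ℂ)^2) t
          = Wsum θ0 θ1 p (fun y => (y:ℂ)^2) t + ((2 : ℂ) • Wsum θ0 θ1 p (fun y => (y:ℂ)) t
            + (1:ℂ) • Wsum θ0 θ1 p (fun _ => 1) t) := by
        rw [← Wsum_smul, ← Wsum_smul, ← Wsum_add, ← Wsum_add]
        exact Wsum_congr _ _ _ _ _ _ (fun x => by push_cast; ring)
      rw [this, h0, h1, h2]
      ext i j; fin_cases i <;> fin_cases j <;>
        simp [Matrix.add_apply, Matrix.smul_apply, smul_eq_mul] <;> push_cast <;> ring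
    refine ⟨1 - 2*p - 2*s^2*k,
      (u:ℝ)^2*(A:ℝ) + (u:ℝ)^2*(p:ℝ) + 2*(u:ℝ)^2*(p:ℝ)*(t:ℝ) + 2*(s:ℝ)*(u:ℝ)*(B:ℝ) + 2*(s:ℝ)^2 + 2*(s:ℝ)^2*(t:ℝ)^2 + -2*(s:ℝ)^2*(A:ℝ) + -2*(s:ℝ)^2*(p:ℝ) + 4*(s:ℝ)^2*(u:ℝ)^2*(t:ℝ) + -4*(s:ℝ)^2*(u:ℝ)^2*(p:ℝ)*(t:ℝ) + -4*(s:ℝ)^4*(k:ℝ) + 8*(s:ℝ)^6*(t:ℝ) + -8*(s:ℝ)^6*(t:ℝ)^2,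
      -1*(s:ℝ)*(u:ℝ) + -2*(s:ℝ)*(u:ℝ)*(t:ℝ) + -1*(s:ℝ)*(u:ℝ)*(t:ℝ)^2 + 2*(s:ℝ)*(u:ℝ)*(A:ℝ) + 2*(s:ℝ)*(u:ℝ)*(p:ℝ) + 4*(s:ℝ)*(u:ℝ)*(p:ℝ)*(t:ℝ) + 2*(s:ℝ)^2*(B:ℝ) + 4*(s:ℝ)^3*(u:ℝ)*(t:ℝ) + 2*(s:ℝ)^3*(u:ℝ)*(k:ℝ) + -8*(s:ℝ)^3*(u:ℝ)*(p:ℝ)*(t:ℝ) + -4*(s:ℝ)^5*(u:ℝ)*(t:ℝ) + 4*(s:ℝ)^5*(u:ℝ)*(t:ℝ)^2,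
      ?_, ?_, ?_⟩
    · rw [Wsum_succ, h0, hP, hQ, hPH, hQH]
      ext i j
      fin_cases i <;> fin_cases j <;>
        simp [Matrix.mul_fin_two, Matrix.add_apply] <;> push_cast
      · linear_combination ((p:ℂ)) * huC
      · ring
      · ring
      · linear_combination (1 + -1*(p:ℂ)) * huC
    · rw [Wsum_succ, D1, D2, hP, hQ, hPH, hQH]
      ext i j
      fin_cases i <;> fin_cases j <;>
        simp [Matrix.mul_fin_two, Matrix.add_apply] <;> push_cast
      · linear_combination ((p:ℂ) + (p:ℂ)*(t:ℂ) + 2*(s:ℂ)^2*(t:ℂ) + -2*(s:ℂ)^2*(p:ℂ)*(t:ℂ)) * huC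
      · ring
      · ring
      · linear_combination (-1 + -1*(t:ℂ) + (p:ℂ) + (p:ℂ)*(t:ℂ) + -2*(s:ℂ)^2*(p:ℂ)*(t:ℂ)) * huC
    · rw [Wsum_succ, D3, D4, hP, hQ, hPH, hQH]
      ext i j
      fin_cases i <;> fin_cases j <;>
        simp [Matrix.mul_fin_two, Matrix.add_apply] <;> push_cast
      · ring
      · ring
      · ring
      · linear_combination (1 + 2*(t:ℂ) + (t:ℂ)^2 + 4*(s:ℂ)^2*(t:ℂ) + 4*(s:ℂ)^4*(t:ℂ) + -4*(s:ℂ)^4*(t:ℂ)^2) * huC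

theorem owalk_moment2_eq (θ0 θ1 p : ℝ) (hp0 : 0 ≤ p) (hp1 : p ≤ 1)
    (h : Real.cos θ0 = Real.sin θ0 * Real.sin θ1) :
    ∀ t : ℕ, moment2 θ0 θ1 p t =
      Real.sin θ0 ^ 4 * Real.cos θ1 ^ 2 * (1 + 3 * Real.sin θ1 ^ 2) * t ^ 2
        + Real.sin θ0 ^ 2 *
          (1 + Real.sin θ1 ^ 2 - Real.sin θ0 ^ 2 * Real.cos θ1 ^ 2 * (1 + 3 * Real.sin θ1 ^ 2)) * t := by
  intro t
  have hs0 := Real.sin_sq_add_cos_sq θ0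
  have hs1 := Real.sin_sq_add_cos_sq θ1
  have hc : Real.cos θ0 ^ 2 = (Real.sin θ0 * Real.sin θ1) ^ 2 := by rw [h]
  have hu : 2*(Real.sin θ0 * Real.sin θ1)^2 + (Real.sin θ0 * Real.cos θ1)^2 = 1 := by
    linear_combination (Real.sin θ0)^2 * hs1 + hs0 - hc
  have hP : Pmat θ0 θ1
      = !![(0:ℂ), ((Real.sin θ0 * Real.sin θ1 : ℝ):ℂ);
           ((Real.sin θ0 * Real.sin θ1 : ℝ):ℂ), -((Real.sin θ0 * Real.cos θ1 : ℝ):ℂ)] := by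
    rw [Pmat, h]
  have hQ : Qmat θ0 θ1
      = !![((Real.sin θ0 * Real.cos θ1 : ℝ):ℂ), ((Real.sin θ0 * Real.sin θ1 : ℝ):ℂ);
           ((Real.sin θ0 * Real.sin θ1 : ℝ):ℂ), 0] := by
    rw [Qmat, h]
  obtain ⟨k, A, B, h0, h1, h2⟩ :=
    keyInd θ0 θ1 p (Real.sin θ0 * Real.sin θ1) (Real.sin θ0 * Real.cos θ1) hP hQ hu t
  have hm : moment2 θ0 θ1 p t = ((Wsum θ0 θ1 p (fun y => (y:ℂ)^2) t).trace).re := by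
    unfold moment2 Wsum findprob
    rw [Matrix.trace_sum, Complex.re_sum]
    apply Finset.sum_congr rfl
    intro x _
    have e : ((x:ℂ))^2 = (((x:ℝ)^2 : ℝ) : ℂ) := by push_cast; ring
    rw [Matrix.trace_smul, smul_eq_mul]
    simp only [e, Complex.re_ofReal_mul]
  rw [hm, h2]
  rw [Matrix.trace_fin_two]
  simp only [Matrix.cons_val', Matrix.cons_val_zero, Matrix.cons_val_one, Matrix.head_cons,
    Matrix.head_fin_const, Matrix.empty_val', Matrix.cons_val_fin_one, Matrix.of_apply]
  rw [← Complex.ofReal_add, Complex.ofReal_re]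
  have hc1 : Real.cos θ1 ^ 2 = 1 - Real.sin θ1 ^ 2 := by linear_combination hs1
  have h2' : Real.sin θ0 ^ 2 * (1 + Real.sin θ1 ^ 2) = 1 := by
    linear_combination hs0 - (Real.cos θ0 + Real.sin θ0 * Real.sin θ1) * h
  linear_combination ((t:ℝ) - (t:ℝ)^2) * (Real.sin θ0^4*(1+3*Real.sin θ1^2)) * hc1
    + (((t:ℝ) - (t:ℝ)^2)*(Real.sin θ0^2*(1+Real.sin θ1^2)+1) - (t:ℝ)) * h2'
end

section
/- Suppose cos θ0 = sin θ0 · sin θ1. Then for every time t ∈ ℕ, the variance of the open quantum walk satisfies E₂(t) − E₁(t)² = s0⁴·c1²·(1 + 3·s1² − (2p − 1)²·c1²)·t² + s0²·(1 + s1² − s0²·c1²·(1 + 3·s1²))·t, where c0 = cos θ0, s0 = sin θ0, c1 = cos θ1, s1 = sin θ1. -/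
open Matrix Complex Filter

/-! ### Auxiliary machinery -/

namespace OWalkAux

/-- The linear functional `q(A) = c1 (A₀₀ - A₁₁) + 2 s1 (A₀₁ + A₁₀)`. -/
noncomputable def qf (θ1 : ℝ) (A : Matrix (Fin 2) (Fin 2) ℂ) : ℂ :=
  (Real.cos θ1 : ℂ) * (A 0 0 - A 1 1) + 2 * (Real.sin θ1 : ℂ) * (A 0 1 + A 1 0)

lemma qf_add (θ1 : ℝ) (A B : Matrix (Fin 2) (Fin 2) ℂ) :
    qf θ1 (A + B) = qf θ1 A + qf θ1 B := by
  simp [qf, Matrix.add_apply]; ring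

lemma qf_sub (θ1 : ℝ) (A B : Matrix (Fin 2) (Fin 2) ℂ) :
    qf θ1 (A - B) = qf θ1 A - qf θ1 B := by
  simp [qf, Matrix.sub_apply]; ring

lemma qf_smul (θ1 : ℝ) (c : ℂ) (A : Matrix (Fin 2) (Fin 2) ℂ) :
    qf θ1 (c • A) = c * qf θ1 A := by
  simp [qf, Matrix.smul_apply, smul_eq_mul]; ring

lemma PmatH (θ0 θ1 : ℝ) : (Pmat θ0 θ1)ᴴ =
    !![0, ((Real.sin θ0 * Real.sin θ1 : ℝ) : ℂ);
       (Real.cos θ0 : ℂ), (-((Real.sin θ0 * Real.cos θ1 : ℝ) : ℂ))] := by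
  ext i j
  fin_cases i <;> fin_cases j <;>
    simp [Pmat, ← Complex.sin_conj, ← Complex.cos_conj, Complex.conj_ofReal]

lemma QmatH (θ0 θ1 : ℝ) : (Qmat θ0 θ1)ᴴ =
    !![((Real.sin θ0 * Real.cos θ1 : ℝ) : ℂ), (Real.cos θ0 : ℂ);
       ((Real.sin θ0 * Real.sin θ1 : ℝ) : ℂ), 0] := by
  ext i j
  fin_cases i <;> fin_cases j <;>
    simp [Qmat, ← Complex.sin_conj, ← Complex.cos_conj, Complex.conj_ofReal]

section entry
variable (θ0 θ1 : ℝ)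

private lemma p0c : ((Real.sin θ0 : ℂ))^2 + (Real.cos θ0 : ℂ)^2 = 1 := by
  exact_mod_cast congrArg (Complex.ofReal) (Real.sin_sq_add_cos_sq θ0)

/-- trace preservation. -/
lemma trace_Phi (A : Matrix (Fin 2) (Fin 2) ℂ) :
    (Pmat θ0 θ1 * A * (Pmat θ0 θ1)ᴴ + Qmat θ0 θ1 * A * (Qmat θ0 θ1)ᴴ).trace = A.trace := by
  have p0 := p0c θ0
  have p1 := p0c θ1
  rw [Matrix.eta_fin_two A, PmatH, QmatH]
  simp only [Pmat, Qmat, Matrix.mul_fin_two, Matrix.trace_fin_two, Matrix.add_apply,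
    Matrix.cons_val', Matrix.cons_val_zero, Matrix.cons_val_one, Matrix.head_cons,
    Matrix.head_fin_const, Matrix.empty_val', Matrix.cons_val_fin_one, Matrix.of_apply,
    Complex.ofReal_mul]
  linear_combination (A 0 0 + A 1 1) * ((Real.sin θ0:ℂ)^2 * p1 + p0)

variable (h : Real.cos θ0 = Real.sin θ0 * Real.sin θ1)
include h

private lemma hc : (Real.cos θ0 : ℂ) = (Real.sin θ0 : ℂ) * (Real.sin θ1 : ℂ) := by
  exact_mod_cast congrArg (Complex.ofReal) h

/-- `q` is invariant under the channel. -/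
lemma qf_Phi (A : Matrix (Fin 2) (Fin 2) ℂ) :
    qf θ1 (Pmat θ0 θ1 * A * (Pmat θ0 θ1)ᴴ + Qmat θ0 θ1 * A * (Qmat θ0 θ1)ᴴ) = qf θ1 A := by
  have p0 := p0c θ0
  have p1 := p0c θ1
  have hcc := hc θ0 θ1 h
  rw [Matrix.eta_fin_two A, PmatH, QmatH]
  simp only [Pmat, Qmat, qf, Matrix.mul_fin_two, Matrix.add_apply,
    Matrix.cons_val', Matrix.cons_val_zero, Matrix.cons_val_one, Matrix.head_cons,
    Matrix.head_fin_const, Matrix.empty_val', Matrix.cons_val_fin_one, Matrix.of_apply,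
    Complex.ofReal_mul]
  linear_combination
    (A 0 0 - A 1 1) * (Real.cos θ1:ℂ) *
        (p0 + (Real.sin θ0:ℂ)^2 * p1
          - 2*((Real.cos θ0:ℂ) - (Real.sin θ0:ℂ)*(Real.sin θ1:ℂ)) * hcc)
      + 2*(Real.sin θ1:ℂ)*(A 0 1 + A 1 0) *
        (p0 + (Real.sin θ0:ℂ)^2 * p1
          - ((Real.cos θ0:ℂ) - (Real.sin θ0:ℂ)*(Real.sin θ1:ℂ)) * hcc)

/-- trace of the drift part. -/
lemma trace_D (A : Matrix (Fin 2) (Fin 2) ℂ) :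
    (Qmat θ0 θ1 * A * (Qmat θ0 θ1)ᴴ - Pmat θ0 θ1 * A * (Pmat θ0 θ1)ᴴ).trace
      = (Real.sin θ0:ℂ)^2 * (Real.cos θ1:ℂ) * qf θ1 A := by
  have hcc := hc θ0 θ1 h
  rw [Matrix.eta_fin_two A, PmatH, QmatH]
  simp only [Pmat, Qmat, qf, Matrix.mul_fin_two, Matrix.trace_fin_two, Matrix.sub_apply,
    Matrix.cons_val', Matrix.cons_val_zero, Matrix.cons_val_one, Matrix.head_cons,
    Matrix.head_fin_const, Matrix.empty_val', Matrix.cons_val_fin_one, Matrix.of_apply,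
    Complex.ofReal_mul]
  linear_combination (A 0 0 - A 1 1) * ((Real.cos θ0:ℂ) + (Real.sin θ0:ℂ)*(Real.sin θ1:ℂ)) * hcc

/-- `q` of the drift part. -/
lemma qf_D (A : Matrix (Fin 2) (Fin 2) ℂ) :
    qf θ1 (Qmat θ0 θ1 * A * (Qmat θ0 θ1)ᴴ - Pmat θ0 θ1 * A * (Pmat θ0 θ1)ᴴ)
      = (Real.sin θ0:ℂ)^2 * (Real.cos θ1:ℂ) * (1 + 3*(Real.sin θ1:ℂ)^2) * A.trace := by
  have p1 := p0c θ1
  have hcc := hc θ0 θ1 h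
  rw [Matrix.eta_fin_two A, PmatH, QmatH]
  simp only [Pmat, Qmat, qf, Matrix.mul_fin_two, Matrix.trace_fin_two, Matrix.sub_apply,
    Matrix.cons_val', Matrix.cons_val_zero, Matrix.cons_val_one, Matrix.head_cons,
    Matrix.head_fin_const, Matrix.empty_val', Matrix.cons_val_fin_one, Matrix.of_apply,
    Complex.ofReal_mul]
  linear_combination (Real.cos θ1:ℂ) * (A 0 0 + A 1 1) *
    ((Real.sin θ0:ℂ)^2 * p1
      + (3*(Real.sin θ0:ℂ)*(Real.sin θ1:ℂ) - (Real.cos θ0:ℂ)) * hcc)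

end entry

/-- Partial weighted sums of the walk. -/
noncomputable def Ssum (θ0 θ1 p : ℝ) (k : ℕ) (t : ℕ) : Matrix (Fin 2) (Fin 2) ℂ :=
  ∑ x ∈ Finset.Icc (-(t : ℤ)) (t : ℤ), ((x : ℂ)^k) • owalk θ0 θ1 p t x

lemma owalk_support (θ0 θ1 p : ℝ) :
    ∀ t : ℕ, ∀ x : ℤ, ((t : ℤ) < x ∨ x < -(t : ℤ)) → owalk θ0 θ1 p t x = 0 := by
  intro t
  induction t with
  | zero =>
    intro x hx
    have : x ≠ 0 := by omega
    simp [owalk, this]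
  | succ t ih =>
    intro x hx
    have h1 : owalk θ0 θ1 p t (x + 1) = 0 := ih (x+1) (by push_cast at hx ⊢; omega)
    have h2 : owalk θ0 θ1 p t (x - 1) = 0 := ih (x-1) (by push_cast at hx ⊢; omega)
    simp [owalk, h1, h2]

section sums
variable (θ0 θ1 p : ℝ)

lemma shiftP (t : ℕ) (f : ℤ → ℂ) :
    ∑ x ∈ Finset.Icc (-(t:ℤ)-1) ((t:ℤ)+1),
        f x • (Pmat θ0 θ1 * owalk θ0 θ1 p t (x+1) * (Pmat θ0 θ1)ᴴ)
      = Pmat θ0 θ1 * (∑ y ∈ Finset.Icc (-(t:ℤ)) (t:ℤ), f (y-1) • owalk θ0 θ1 p t y) *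
          (Pmat θ0 θ1)ᴴ := by
  have e1 : Pmat θ0 θ1 * (∑ y ∈ Finset.Icc (-(t:ℤ)) (t:ℤ), f (y-1) • owalk θ0 θ1 p t y) *
        (Pmat θ0 θ1)ᴴ
      = ∑ y ∈ Finset.Icc (-(t:ℤ)) (t:ℤ),
          f (y-1) • (Pmat θ0 θ1 * owalk θ0 θ1 p t y * (Pmat θ0 θ1)ᴴ) := by
    rw [Finset.mul_sum, Finset.sum_mul]
    refine Finset.sum_congr rfl fun y _ => ?_
    rw [Matrix.mul_smul, Matrix.smul_mul]
  rw [e1]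
  rw [Finset.sum_subset (Finset.Icc_subset_Icc le_rfl (by omega : (t:ℤ) ≤ (t:ℤ)+2))
    (fun y hy hy' => by
      have hb : (t:ℤ) < y := by
        simp only [Finset.mem_Icc] at hy hy'; omega
      rw [owalk_support θ0 θ1 p t y (Or.inl hb)]
      simp)]
  rw [show Finset.Icc (-(t:ℤ)) ((t:ℤ)+2)
      = (Finset.Icc (-(t:ℤ)-1) ((t:ℤ)+1)).map (addRightEmbedding 1) from by
        rw [Finset.map_add_right_Icc]; congr 1 <;> ring]
  rw [Finset.sum_map]
  refine Finset.sum_congr rfl fun x _ => ?_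
  simp [addRightEmbedding]

lemma shiftQ (t : ℕ) (f : ℤ → ℂ) :
    ∑ x ∈ Finset.Icc (-(t:ℤ)-1) ((t:ℤ)+1),
        f x • (Qmat θ0 θ1 * owalk θ0 θ1 p t (x-1) * (Qmat θ0 θ1)ᴴ)
      = Qmat θ0 θ1 * (∑ y ∈ Finset.Icc (-(t:ℤ)) (t:ℤ), f (y+1) • owalk θ0 θ1 p t y) *
          (Qmat θ0 θ1)ᴴ := by
  have e1 : Qmat θ0 θ1 * (∑ y ∈ Finset.Icc (-(t:ℤ)) (t:ℤ), f (y+1) • owalk θ0 θ1 p t y) *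
        (Qmat θ0 θ1)ᴴ
      = ∑ y ∈ Finset.Icc (-(t:ℤ)) (t:ℤ),
          f (y+1) • (Qmat θ0 θ1 * owalk θ0 θ1 p t y * (Qmat θ0 θ1)ᴴ) := by
    rw [Finset.mul_sum, Finset.sum_mul]
    refine Finset.sum_congr rfl fun y _ => ?_
    rw [Matrix.mul_smul, Matrix.smul_mul]
  rw [e1]
  rw [Finset.sum_subset (Finset.Icc_subset_Icc (by omega : -(t:ℤ)-2 ≤ -(t:ℤ)) le_rfl)
    (fun y hy hy' => by
      have hb : y < -(t:ℤ) := by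
        simp only [Finset.mem_Icc] at hy hy'; omega
      rw [owalk_support θ0 θ1 p t y (Or.inr hb)]
      simp)]
  rw [show Finset.Icc (-(t:ℤ)-2) ((t:ℤ))
      = (Finset.Icc (-(t:ℤ)-1) ((t:ℤ)+1)).map (addRightEmbedding (-1)) from by
        rw [Finset.map_add_right_Icc]; congr 1 <;> ring]
  rw [Finset.sum_map]
  refine Finset.sum_congr rfl fun x _ => ?_
  simp only [addRightEmbedding_apply]
  rw [show x + (-1) = x - 1 from by ring, show x - 1 + 1 = x from by ring]

lemma Ssum_succ (k t : ℕ) :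
    Ssum θ0 θ1 p k (t+1)
      = Pmat θ0 θ1 *
          (∑ y ∈ Finset.Icc (-(t:ℤ)) (t:ℤ), (((y - 1 : ℤ) : ℂ))^k • owalk θ0 θ1 p t y) *
          (Pmat θ0 θ1)ᴴ
      + Qmat θ0 θ1 *
          (∑ y ∈ Finset.Icc (-(t:ℤ)) (t:ℤ), (((y + 1 : ℤ) : ℂ))^k • owalk θ0 θ1 p t y) *
          (Qmat θ0 θ1)ᴴ := by
  rw [Ssum, Nat.cast_add, Nat.cast_one,
    show -((t:ℤ)+1) = -(t:ℤ)-1 from by ring]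
  have expand : ∀ x ∈ Finset.Icc (-(t:ℤ)-1) ((t:ℤ)+1),
      ((x:ℂ)^k) • owalk θ0 θ1 p (t+1) x
        = (x:ℂ)^k • (Pmat θ0 θ1 * owalk θ0 θ1 p t (x+1) * (Pmat θ0 θ1)ᴴ)
          + (x:ℂ)^k • (Qmat θ0 θ1 * owalk θ0 θ1 p t (x-1) * (Qmat θ0 θ1)ᴴ) := by
    intro x _
    rw [show owalk θ0 θ1 p (t+1) x
        = Pmat θ0 θ1 * owalk θ0 θ1 p t (x + 1) * (Pmat θ0 θ1)ᴴ
          + Qmat θ0 θ1 * owalk θ0 θ1 p t (x - 1) * (Qmat θ0 θ1)ᴴ from rfl]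
    rw [smul_add]
  rw [Finset.sum_congr rfl expand, Finset.sum_add_distrib,
    shiftP θ0 θ1 p t (fun x => (x:ℂ)^k), shiftQ θ0 θ1 p t (fun x => (x:ℂ)^k)]

lemma inner1m (t : ℕ) :
    ∑ y ∈ Finset.Icc (-(t:ℤ)) (t:ℤ), (((y - 1 : ℤ) : ℂ))^1 • owalk θ0 θ1 p t y
      = Ssum θ0 θ1 p 1 t - Ssum θ0 θ1 p 0 t := by
  rw [Ssum, Ssum, ← Finset.sum_sub_distrib]
  refine Finset.sum_congr rfl fun y _ => ?_
  rw [← sub_smul]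
  congr 1
  push_cast
  ring

lemma inner1p (t : ℕ) :
    ∑ y ∈ Finset.Icc (-(t:ℤ)) (t:ℤ), (((y + 1 : ℤ) : ℂ))^1 • owalk θ0 θ1 p t y
      = Ssum θ0 θ1 p 1 t + Ssum θ0 θ1 p 0 t := by
  rw [Ssum, Ssum, ← Finset.sum_add_distrib]
  refine Finset.sum_congr rfl fun y _ => ?_
  rw [← add_smul]
  congr 1
  push_cast
  ring

lemma inner2m (t : ℕ) :
    ∑ y ∈ Finset.Icc (-(t:ℤ)) (t:ℤ), (((y - 1 : ℤ) : ℂ))^2 • owalk θ0 θ1 p t y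
      = Ssum θ0 θ1 p 2 t - (2:ℂ) • Ssum θ0 θ1 p 1 t + Ssum θ0 θ1 p 0 t := by
  rw [Ssum, Ssum, Ssum, Finset.smul_sum, ← Finset.sum_sub_distrib, ← Finset.sum_add_distrib]
  refine Finset.sum_congr rfl fun y _ => ?_
  rw [smul_smul, ← sub_smul, ← add_smul]
  congr 1
  push_cast
  ring

lemma inner2p (t : ℕ) :
    ∑ y ∈ Finset.Icc (-(t:ℤ)) (t:ℤ), (((y + 1 : ℤ) : ℂ))^2 • owalk θ0 θ1 p t y
      = Ssum θ0 θ1 p 2 t + (2:ℂ) • Ssum θ0 θ1 p 1 t + Ssum θ0 θ1 p 0 t := by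
  rw [Ssum, Ssum, Ssum, Finset.smul_sum, ← Finset.sum_add_distrib, ← Finset.sum_add_distrib]
  refine Finset.sum_congr rfl fun y _ => ?_
  rw [smul_smul, ← add_smul, ← add_smul]
  congr 1
  push_cast
  ring_nf

lemma inner0 (t : ℕ) :
    ∀ (g : ℤ → ℤ), ∑ y ∈ Finset.Icc (-(t:ℤ)) (t:ℤ), (((g y : ℤ) : ℂ))^0 • owalk θ0 θ1 p t y
      = Ssum θ0 θ1 p 0 t := by
  intro g
  rw [Ssum]
  refine Finset.sum_congr rfl fun y _ => ?_
  simp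

end sums

section closed
variable (θ0 θ1 p : ℝ)

lemma Ssum_zero_t0 : Ssum θ0 θ1 p 0 0 = Matrix.diagonal ![(p : ℂ), ((1 - p : ℝ) : ℂ)] := by
  rw [Ssum]
  simp [owalk]

lemma Ssum_one_t0 : Ssum θ0 θ1 p 1 0 = 0 := by
  rw [Ssum]
  simp

lemma Ssum_two_t0 : Ssum θ0 θ1 p 2 0 = 0 := by
  rw [Ssum]
  simp

lemma trace_S0 : ∀ t : ℕ, (Ssum θ0 θ1 p 0 t).trace = 1 := by
  intro t
  induction t with
  | zero =>
    rw [Ssum_zero_t0]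
    rw [Matrix.trace_diagonal]
    push_cast
    simp [Fin.sum_univ_two]
  | succ t ih =>
    rw [Ssum_succ, inner0 θ0 θ1 p t (fun y => y - 1), inner0 θ0 θ1 p t (fun y => y + 1)]
    rw [trace_Phi θ0 θ1 (Ssum θ0 θ1 p 0 t), ih]

variable (h : Real.cos θ0 = Real.sin θ0 * Real.sin θ1)
include h

lemma qf_S0 : ∀ t : ℕ, qf θ1 (Ssum θ0 θ1 p 0 t) = (Real.cos θ1 : ℂ) * (2*(p:ℂ) - 1) := by
  intro t
  induction t with
  | zero =>
    rw [Ssum_zero_t0, qf]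
    rw [show (Matrix.diagonal ![(p:ℂ), ((1-p:ℝ):ℂ)]) 0 0 = (p:ℂ) from by simp,
      show (Matrix.diagonal ![(p:ℂ), ((1-p:ℝ):ℂ)]) 1 1 = ((1-p:ℝ):ℂ) from by simp,
      show (Matrix.diagonal ![(p:ℂ), ((1-p:ℝ):ℂ)]) 0 1 = 0 from by
        rw [Matrix.diagonal_apply_ne]; decide,
      show (Matrix.diagonal ![(p:ℂ), ((1-p:ℝ):ℂ)]) 1 0 = 0 from by
        rw [Matrix.diagonal_apply_ne]; decide]
    push_cast
    ring
  | succ t ih =>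
    rw [Ssum_succ, inner0 θ0 θ1 p t (fun y => y - 1), inner0 θ0 θ1 p t (fun y => y + 1)]
    rw [qf_Phi θ0 θ1 h (Ssum θ0 θ1 p 0 t), ih]

lemma trace_S1 : ∀ t : ℕ,
    (Ssum θ0 θ1 p 1 t).trace
      = ((Real.sin θ0^2 * Real.cos θ1^2 * (2*p - 1) * t : ℝ) : ℂ) := by
  intro t
  induction t with
  | zero =>
    rw [Ssum_one_t0]
    simp
  | succ t ih =>
    rw [Ssum_succ, inner1m, inner1p]
    rw [show Pmat θ0 θ1 * (Ssum θ0 θ1 p 1 t - Ssum θ0 θ1 p 0 t) * (Pmat θ0 θ1)ᴴ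
        + Qmat θ0 θ1 * (Ssum θ0 θ1 p 1 t + Ssum θ0 θ1 p 0 t) * (Qmat θ0 θ1)ᴴ
      = (Pmat θ0 θ1 * Ssum θ0 θ1 p 1 t * (Pmat θ0 θ1)ᴴ
          + Qmat θ0 θ1 * Ssum θ0 θ1 p 1 t * (Qmat θ0 θ1)ᴴ)
        + (Qmat θ0 θ1 * Ssum θ0 θ1 p 0 t * (Qmat θ0 θ1)ᴴ
          - Pmat θ0 θ1 * Ssum θ0 θ1 p 0 t * (Pmat θ0 θ1)ᴴ) from by noncomm_ring]
    rw [Matrix.trace_add, trace_Phi θ0 θ1, trace_D θ0 θ1 h, ih, qf_S0 θ0 θ1 p h t]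
    push_cast
    ring

lemma qf_S1 : ∀ t : ℕ,
    qf θ1 (Ssum θ0 θ1 p 1 t)
      = (Real.sin θ0:ℂ)^2 * (Real.cos θ1:ℂ) * (1 + 3*(Real.sin θ1:ℂ)^2) * (t:ℂ) := by
  intro t
  induction t with
  | zero =>
    rw [Ssum_one_t0]
    simp [qf]
  | succ t ih =>
    rw [Ssum_succ, inner1m, inner1p]
    rw [show Pmat θ0 θ1 * (Ssum θ0 θ1 p 1 t - Ssum θ0 θ1 p 0 t) * (Pmat θ0 θ1)ᴴ
        + Qmat θ0 θ1 * (Ssum θ0 θ1 p 1 t + Ssum θ0 θ1 p 0 t) * (Qmat θ0 θ1)ᴴ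
      = (Pmat θ0 θ1 * Ssum θ0 θ1 p 1 t * (Pmat θ0 θ1)ᴴ
          + Qmat θ0 θ1 * Ssum θ0 θ1 p 1 t * (Qmat θ0 θ1)ᴴ)
        + (Qmat θ0 θ1 * Ssum θ0 θ1 p 0 t * (Qmat θ0 θ1)ᴴ
          - Pmat θ0 θ1 * Ssum θ0 θ1 p 0 t * (Pmat θ0 θ1)ᴴ) from by noncomm_ring]
    rw [qf_add, qf_Phi θ0 θ1 h, qf_D θ0 θ1 h, trace_S0, ih]
    push_cast
    ring

lemma trace_S2 : ∀ t : ℕ,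
    (Ssum θ0 θ1 p 2 t).trace
      = ((Real.sin θ0^4 * Real.cos θ1^2 * (1 + 3*Real.sin θ1^2) * (t^2 - t) + t : ℝ) : ℂ) := by
  intro t
  induction t with
  | zero =>
    rw [Ssum_two_t0]
    simp
  | succ t ih =>
    rw [Ssum_succ, inner2m, inner2p]
    rw [show Pmat θ0 θ1 * (Ssum θ0 θ1 p 2 t - (2:ℂ) • Ssum θ0 θ1 p 1 t + Ssum θ0 θ1 p 0 t) *
          (Pmat θ0 θ1)ᴴ
        + Qmat θ0 θ1 * (Ssum θ0 θ1 p 2 t + (2:ℂ) • Ssum θ0 θ1 p 1 t + Ssum θ0 θ1 p 0 t) *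
          (Qmat θ0 θ1)ᴴ
      = ((Pmat θ0 θ1 * Ssum θ0 θ1 p 2 t * (Pmat θ0 θ1)ᴴ
          + Qmat θ0 θ1 * Ssum θ0 θ1 p 2 t * (Qmat θ0 θ1)ᴴ)
        + (Qmat θ0 θ1 * ((2:ℂ) • Ssum θ0 θ1 p 1 t) * (Qmat θ0 θ1)ᴴ
          - Pmat θ0 θ1 * ((2:ℂ) • Ssum θ0 θ1 p 1 t) * (Pmat θ0 θ1)ᴴ))
        + (Pmat θ0 θ1 * Ssum θ0 θ1 p 0 t * (Pmat θ0 θ1)ᴴ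
          + Qmat θ0 θ1 * Ssum θ0 θ1 p 0 t * (Qmat θ0 θ1)ᴴ) from by
        rw [Matrix.mul_smul, Matrix.smul_mul]
        noncomm_ring]
    rw [Matrix.trace_add, Matrix.trace_add, trace_Phi θ0 θ1, trace_Phi θ0 θ1,
      trace_D θ0 θ1 h, qf_smul, qf_S1 θ0 θ1 p h t, ih, trace_S0]
    push_cast
    ring

end closed

section moments
variable (θ0 θ1 p : ℝ)

lemma moment1_eq (t : ℕ) : moment1 θ0 θ1 p t = ((Ssum θ0 θ1 p 1 t).trace).re := by
  rw [moment1, Ssum, Matrix.trace_sum, Complex.re_sum]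
  refine Finset.sum_congr rfl fun x _ => ?_
  rw [findprob, Matrix.trace_smul, smul_eq_mul, pow_one]
  rw [show ((x:ℤ):ℂ) = (((x:ℝ)):ℂ) from by push_cast; ring]
  rw [Complex.re_ofReal_mul]

lemma moment2_eq (t : ℕ) : moment2 θ0 θ1 p t = ((Ssum θ0 θ1 p 2 t).trace).re := by
  rw [moment2, Ssum, Matrix.trace_sum, Complex.re_sum]
  refine Finset.sum_congr rfl fun x _ => ?_
  rw [findprob, Matrix.trace_smul, smul_eq_mul]
  rw [show ((x:ℤ):ℂ)^2 = ((((x:ℝ)^2 : ℝ)):ℂ) from by push_cast; ring]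
  rw [Complex.re_ofReal_mul]

end moments

end OWalkAux

open OWalkAux in
theorem owalk_variance_eq (θ0 θ1 p : ℝ) (hp0 : 0 ≤ p) (hp1 : p ≤ 1)
    (h : Real.cos θ0 = Real.sin θ0 * Real.sin θ1) :
    ∀ t : ℕ, moment2 θ0 θ1 p t - (moment1 θ0 θ1 p t) ^ 2 =
      Real.sin θ0 ^ 4 * Real.cos θ1 ^ 2 *
          (1 + 3 * Real.sin θ1 ^ 2 - (2 * p - 1) ^ 2 * Real.cos θ1 ^ 2) * t ^ 2
        + Real.sin θ0 ^ 2 *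
          (1 + Real.sin θ1 ^ 2 - Real.sin θ0 ^ 2 * Real.cos θ1 ^ 2 * (1 + 3 * Real.sin θ1 ^ 2)) * t := by
  intro t
  have h1 : moment1 θ0 θ1 p t = Real.sin θ0^2 * Real.cos θ1^2 * (2*p - 1) * t := by
    rw [moment1_eq, trace_S1 θ0 θ1 p h t, Complex.ofReal_re]
  have h2 : moment2 θ0 θ1 p t
      = Real.sin θ0^4 * Real.cos θ1^2 * (1 + 3*Real.sin θ1^2) * ((t:ℝ)^2 - t) + t := by
    rw [moment2_eq, trace_S2 θ0 θ1 p h t, Complex.ofReal_re]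
  rw [h1, h2]
  have p0 := Real.sin_sq_add_cos_sq θ0
  linear_combination (t:ℝ) * (Real.cos θ0 + Real.sin θ0 * Real.sin θ1) * h - (t:ℝ) * p0
end

section
/- Suppose cos θ0 = sin θ0 · sin θ1 and cos θ1 = 0. Then the sequence σ(t)/√t converges to 1 as t → ∞. -/
open Matrix Complex Filter

lemma trace_conj (c : ℝ) (hc : c^2 = 1/2) (A : Matrix (Fin 2) (Fin 2) ℂ) :
    (!![0,(c:ℂ); (c:ℂ),0] * A * (!![0,(c:ℂ);(c:ℂ),0])ᴴ).trace = (1/2 : ℂ) * A.trace := by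
  have hc' : (c:ℂ)^2 = 1/2 := by
    have := congrArg (Complex.ofReal) hc
    push_cast at this
    simpa using this
  simp [Matrix.trace_fin_two, Matrix.mul_apply, Fin.sum_univ_two, Matrix.conjTranspose_apply,
    Matrix.vecMul, dotProduct]
  ring_nf
  rw [← hc']
  ring

section
variable (θ0 θ1 p : ℝ)

lemma Pmat_eq (h : Real.cos θ0 = Real.sin θ0 * Real.sin θ1) (hc1 : Real.cos θ1 = 0) :
    Pmat θ0 θ1 = !![0, (Real.cos θ0 : ℂ); (Real.cos θ0 : ℂ), 0] := by
  simp [Pmat, hc1, ← h]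

lemma Qmat_eq (h : Real.cos θ0 = Real.sin θ0 * Real.sin θ1) (hc1 : Real.cos θ1 = 0) :
    Qmat θ0 θ1 = !![0, (Real.cos θ0 : ℂ); (Real.cos θ0 : ℂ), 0] := by
  simp [Qmat, hc1, ← h]

lemma cos_sq_half (h : Real.cos θ0 = Real.sin θ0 * Real.sin θ1) (hc1 : Real.cos θ1 = 0) :
    Real.cos θ0 ^ 2 = 1 / 2 := by
  have h1 : Real.sin θ1 ^ 2 = 1 := by
    have := Real.sin_sq_add_cos_sq θ1
    rw [hc1] at this; nlinarith
  have h2 : Real.cos θ0 ^ 2 = Real.sin θ0 ^ 2 * Real.sin θ1 ^ 2 := by rw [h]; ring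
  rw [h1, mul_one] at h2
  have h0 := Real.sin_sq_add_cos_sq θ0
  linarith

lemma findprob_rec (h : Real.cos θ0 = Real.sin θ0 * Real.sin θ1) (hc1 : Real.cos θ1 = 0)
    (t : ℕ) (x : ℤ) :
    findprob θ0 θ1 p (t+1) x
      = (findprob θ0 θ1 p t (x+1) + findprob θ0 θ1 p t (x-1)) / 2 := by
  have hc := cos_sq_half θ0 θ1 h hc1
  unfold findprob
  rw [owalk, Pmat_eq θ0 θ1 h hc1, Qmat_eq θ0 θ1 h hc1, Matrix.trace_add,
    trace_conj _ hc, trace_conj _ hc]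
  simp [Complex.add_re, Complex.mul_re]
  ring

lemma owalk_zero (t : ℕ) (x : ℤ) (hx : (t : ℤ) < |x|) : owalk θ0 θ1 p t x = 0 := by
  induction t generalizing x with
  | zero =>
    have : x ≠ 0 := by intro hx0; simp [hx0] at hx
    simp [owalk, this]
  | succ t ih =>
    have h1 : owalk θ0 θ1 p t (x+1) = 0 := ih (x+1) (by simp only [lt_abs] at hx ⊢; push_cast at hx ⊢; omega)
    have h2 : owalk θ0 θ1 p t (x-1) = 0 := ih (x-1) (by simp only [lt_abs] at hx ⊢; push_cast at hx ⊢; omega)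
    rw [owalk, h1, h2]
    simp

lemma findprob_zero (t : ℕ) (x : ℤ) (hx : (t : ℤ) < |x|) : findprob θ0 θ1 p t x = 0 := by
  simp [findprob, owalk_zero θ0 θ1 p t x hx]

section
variable (θ0 θ1 p : ℝ)
variable (h : Real.cos θ0 = Real.sin θ0 * Real.sin θ1) (hc1 : Real.cos θ1 = 0)

lemma shift_sum (f : ℤ → ℝ) (c a b : ℤ) :
    ∑ x ∈ Finset.Icc a b, f (x + c) = ∑ y ∈ Finset.Icc (a + c) (b + c), f y := by
  rw [← Finset.map_add_right_Icc, Finset.sum_map]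
  rfl

lemma shrink_sum (g : ℤ → ℝ) (t : ℕ) (a b : ℤ) (ha : a ≤ -(t:ℤ)) (hb : (t:ℤ) ≤ b) :
    ∑ y ∈ Finset.Icc a b, g y * findprob θ0 θ1 p t y
      = ∑ y ∈ Finset.Icc (-(t:ℤ)) (t:ℤ), g y * findprob θ0 θ1 p t y := by
  apply (Finset.sum_subset ?_ ?_).symm
  · intro y hy
    simp only [Finset.mem_Icc] at hy ⊢
    omega
  · intro y hy hy2
    simp only [Finset.mem_Icc] at hy hy2
    rw [findprob_zero θ0 θ1 p t y (by rw [lt_abs]; omega), mul_zero]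

include h hc1 in
lemma sum_rec (g : ℤ → ℝ) (t : ℕ) :
    ∑ x ∈ Finset.Icc (-(t:ℤ) - 1) ((t:ℤ) + 1), g x * findprob θ0 θ1 p (t+1) x
      = ∑ y ∈ Finset.Icc (-(t:ℤ)) (t:ℤ),
          ((g (y-1) + g (y+1)) / 2) * findprob θ0 θ1 p t y := by
  have step1 : ∑ x ∈ Finset.Icc (-(t:ℤ) - 1) ((t:ℤ) + 1), g x * findprob θ0 θ1 p (t+1) x
      = ∑ x ∈ Finset.Icc (-(t:ℤ) - 1) ((t:ℤ) + 1),
          ((fun y => g (y - 1) * findprob θ0 θ1 p t y / 2) (x + 1)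
            + (fun y => g (y + 1) * findprob θ0 θ1 p t y / 2) (x + (-1))) := by
    refine Finset.sum_congr rfl fun x _ => ?_
    rw [findprob_rec θ0 θ1 p h hc1 t x]
    simp only []
    have : x + -1 = x - 1 := by ring
    rw [this]
    ring_nf
  rw [step1, Finset.sum_add_distrib,
    shift_sum (fun y => g (y - 1) * findprob θ0 θ1 p t y / 2) 1,
    shift_sum (fun y => g (y + 1) * findprob θ0 θ1 p t y / 2) (-1)]
  have e1 : ∑ y ∈ Finset.Icc (-(t:ℤ) - 1 + 1) ((t:ℤ) + 1 + 1),
        g (y - 1) * findprob θ0 θ1 p t y / 2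
      = ∑ y ∈ Finset.Icc (-(t:ℤ)) (t:ℤ), g (y - 1) * findprob θ0 θ1 p t y / 2 := by
    have := shrink_sum θ0 θ1 p (fun y => g (y - 1) / 2) t (-(t:ℤ) - 1 + 1) ((t:ℤ) + 1 + 1)
      (by omega) (by omega)
    simpa [mul_comm, mul_div_assoc, div_mul_eq_mul_div] using this
  have e2 : ∑ y ∈ Finset.Icc (-(t:ℤ) - 1 + -1) ((t:ℤ) + 1 + -1),
        g (y + 1) * findprob θ0 θ1 p t y / 2
      = ∑ y ∈ Finset.Icc (-(t:ℤ)) (t:ℤ), g (y + 1) * findprob θ0 θ1 p t y / 2 := by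
    have := shrink_sum θ0 θ1 p (fun y => g (y + 1) / 2) t (-(t:ℤ) - 1 + -1) ((t:ℤ) + 1 + -1)
      (by omega) (by omega)
    simpa [mul_comm, mul_div_assoc, div_mul_eq_mul_div] using this
  rw [e1, e2, ← Finset.sum_add_distrib]
  refine Finset.sum_congr rfl fun y _ => ?_
  ring

end

section
variable (θ0 θ1 p : ℝ)
variable (h : Real.cos θ0 = Real.sin θ0 * Real.sin θ1) (hc1 : Real.cos θ1 = 0)

include h hc1 in
lemma mass_one (hp0 : 0 ≤ p) (hp1 : p ≤ 1) (t : ℕ) :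
    ∑ x ∈ Finset.Icc (-(t:ℤ)) (t:ℤ), findprob θ0 θ1 p t x = 1 := by
  induction t with
  | zero =>
    simp [findprob, owalk, Matrix.trace_diagonal, Fin.sum_univ_two]
  | succ t ih =>
    have key := sum_rec θ0 θ1 p h hc1 (fun _ => (1:ℝ)) t
    have hcast : (-(((t:ℕ)+1 : ℕ) : ℤ)) = -(t:ℤ) - 1 ∧ ((((t:ℕ)+1 : ℕ)) : ℤ) = (t:ℤ) + 1 := by
      constructor <;> push_cast <;> ring
    rw [hcast.1, hcast.2]
    simp only [one_mul] at key
    rw [key]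
    norm_num
    exact ih

include h hc1 in
lemma moment1_zero (t : ℕ) : moment1 θ0 θ1 p t = 0 := by
  induction t with
  | zero => simp [moment1]
  | succ t ih =>
    have key := sum_rec θ0 θ1 p h hc1 (fun y => (y:ℝ)) t
    unfold moment1 at ih ⊢
    have hcast : (-(((t:ℕ)+1 : ℕ) : ℤ)) = -(t:ℤ) - 1 ∧ ((((t:ℕ)+1 : ℕ)) : ℤ) = (t:ℤ) + 1 := by
      constructor <;> push_cast <;> ring
    rw [hcast.1, hcast.2, key, ← ih]
    refine Finset.sum_congr rfl fun y _ => ?_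
    push_cast
    ring

include h hc1 in
lemma moment2_eq (hp0 : 0 ≤ p) (hp1 : p ≤ 1) (t : ℕ) : moment2 θ0 θ1 p t = t := by
  induction t with
  | zero => simp [moment2]
  | succ t ih =>
    have key := sum_rec θ0 θ1 p h hc1 (fun y => (y:ℝ)^2) t
    unfold moment2 at ih ⊢
    have hcast : (-(((t:ℕ)+1 : ℕ) : ℤ)) = -(t:ℤ) - 1 ∧ ((((t:ℕ)+1 : ℕ)) : ℤ) = (t:ℤ) + 1 := by
      constructor <;> push_cast <;> ring
    rw [hcast.1, hcast.2, key]
    have expand : ∀ y ∈ Finset.Icc (-(t:ℤ)) (t:ℤ),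
        ((((y-1:ℤ):ℝ))^2 + (((y+1:ℤ):ℝ))^2) / 2 * findprob θ0 θ1 p t y
          = ((y:ℝ))^2 * findprob θ0 θ1 p t y + findprob θ0 θ1 p t y := by
      intro y _
      push_cast
      ring
    rw [Finset.sum_congr rfl expand, Finset.sum_add_distrib, ih,
      mass_one θ0 θ1 p h hc1 hp0 hp1 t]
    push_cast
    ring

end

theorem owalk_diffusive_c1_zero (θ0 θ1 p : ℝ) (hp0 : 0 ≤ p) (hp1 : p ≤ 1)
    (h : Real.cos θ0 = Real.sin θ0 * Real.sin θ1) (hc1 : Real.cos θ1 = 0) :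
    Filter.Tendsto (fun t : ℕ => stdDev θ0 θ1 p t / Real.sqrt t) Filter.atTop (nhds 1) := by
  have hstd : ∀ t : ℕ, stdDev θ0 θ1 p t = Real.sqrt t := by
    intro t
    unfold stdDev
    rw [moment1_zero θ0 θ1 p h hc1 t, moment2_eq θ0 θ1 p h hc1 hp0 hp1 t]
    norm_num
  have heq : ∀ᶠ t : ℕ in Filter.atTop,
      stdDev θ0 θ1 p t / Real.sqrt t = 1 := by
    filter_upwards [Filter.eventually_ge_atTop 1] with t ht
    rw [hstd t, div_self]
    positivity
  rw [Filter.tendsto_congr' heq]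
  exact tendsto_const_nhds
end
end

section
/- Suppose cos θ0 = 0 and sin θ1 = 0. Then for every time t ≥ 1 the walker is localized at the extreme positions: μ t t = p, μ t (−t) = 1 − p, and μ t x = 0 for every x ∈ ℤ with x ≠ t and x ≠ −t. -/
open Matrix Complex Filter

lemma Pstep (θ0 θ1 : ℝ) (hc0 : Real.cos θ0 = 0) (hs1 : Real.sin θ1 = 0)
    (ha : Real.sin θ0 * Real.cos θ1 * (Real.sin θ0 * Real.cos θ1) = 1)
    (ρ : Matrix (Fin 2) (Fin 2) ℂ) :
    Pmat θ0 θ1 * ρ * (Pmat θ0 θ1)ᴴ = !![0, 0; 0, ρ 1 1] := by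
  have h1 : ((Real.sin θ0 : ℝ) : ℂ) * ((Real.cos θ1 : ℝ) : ℂ)
      * (((Real.sin θ0 : ℝ) : ℂ) * ((Real.cos θ1 : ℝ) : ℂ)) = 1 := by
    exact_mod_cast congrArg (Complex.ofReal) ha
  have hP : Pmat θ0 θ1 = !![0, 0; 0, -(((Real.sin θ0 * Real.cos θ1 : ℝ)) : ℂ)] := by
    ext i j; fin_cases i <;> fin_cases j <;> simp [Pmat, hc0, hs1]
  rw [hP]
  ext i j
  fin_cases i <;> fin_cases j <;>
    simp [Matrix.mul_apply, Matrix.vecMul, dotProduct, Fin.sum_univ_two,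
      Matrix.conjTranspose_apply, Complex.conj_ofReal, -Complex.ofReal_sin, -Complex.ofReal_cos]
  linear_combination ρ 1 1 * h1

lemma Qstep (θ0 θ1 : ℝ) (hc0 : Real.cos θ0 = 0) (hs1 : Real.sin θ1 = 0)
    (ha : Real.sin θ0 * Real.cos θ1 * (Real.sin θ0 * Real.cos θ1) = 1)
    (ρ : Matrix (Fin 2) (Fin 2) ℂ) :
    Qmat θ0 θ1 * ρ * (Qmat θ0 θ1)ᴴ = !![ρ 0 0, 0; 0, 0] := by
  have h1 : ((Real.sin θ0 : ℝ) : ℂ) * ((Real.cos θ1 : ℝ) : ℂ)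
      * (((Real.sin θ0 : ℝ) : ℂ) * ((Real.cos θ1 : ℝ) : ℂ)) = 1 := by
    exact_mod_cast congrArg (Complex.ofReal) ha
  have hQ : Qmat θ0 θ1 = !![(((Real.sin θ0 * Real.cos θ1 : ℝ)) : ℂ), 0; 0, 0] := by
    ext i j; fin_cases i <;> fin_cases j <;> simp [Qmat, hc0, hs1]
  rw [hQ]
  ext i j
  fin_cases i <;> fin_cases j <;>
    simp [Matrix.mul_apply, Matrix.vecMul, dotProduct, Fin.sum_univ_two,
      Matrix.conjTranspose_apply, Complex.conj_ofReal, -Complex.ofReal_sin, -Complex.ofReal_cos]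
  linear_combination ρ 0 0 * h1

lemma owalk_form (θ0 θ1 p : ℝ) (hc0 : Real.cos θ0 = 0) (hs1 : Real.sin θ1 = 0) :
    ∀ t : ℕ, 1 ≤ t → ∀ x : ℤ,
      owalk θ0 θ1 p t x =
        if x = (t : ℤ) then !![(p : ℂ), 0; 0, 0]
        else if x = -(t : ℤ) then !![0, 0; 0, ((1 - p : ℝ) : ℂ)] else 0 := by
  have ha : Real.sin θ0 * Real.cos θ1 * (Real.sin θ0 * Real.cos θ1) = 1 := by
    have h0 := Real.sin_sq_add_cos_sq θ0
    have h1 := Real.sin_sq_add_cos_sq θ1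
    nlinarith [sq_nonneg (Real.sin θ0), sq_nonneg (Real.cos θ1)]
  intro t
  induction t with
  | zero => omega
  | succ n ih =>
    intro _ x
    have hrec : owalk θ0 θ1 p (n + 1) x
        = !![0, 0; 0, owalk θ0 θ1 p n (x + 1) 1 1]
          + !![owalk θ0 θ1 p n (x - 1) 0 0, 0; 0, 0] := by
      show Pmat θ0 θ1 * owalk θ0 θ1 p n (x + 1) * (Pmat θ0 θ1)ᴴ
          + Qmat θ0 θ1 * owalk θ0 θ1 p n (x - 1) * (Qmat θ0 θ1)ᴴ = _
      rw [Pstep θ0 θ1 hc0 hs1 ha, Qstep θ0 θ1 hc0 hs1 ha]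
    rw [hrec]
    rcases Nat.eq_zero_or_pos n with hn | hn
    · subst hn
      show !![0, 0; 0, (if x + 1 = 0 then Matrix.diagonal ![(p : ℂ), ((1 - p : ℝ) : ℂ)] else 0) 1 1]
          + !![(if x - 1 = 0 then Matrix.diagonal ![(p : ℂ), ((1 - p : ℝ) : ℂ)] else 0) 0 0, 0; 0, 0] = _
      push_cast
      split_ifs <;> (try (exfalso; omega)) <;>
        (ext i j; fin_cases i <;> fin_cases j <;> simp [Matrix.diagonal])
    · rw [ih hn (x + 1), ih hn (x - 1)]
      push_cast
      split_ifs <;> (try (exfalso; omega)) <;>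
        (ext i j; fin_cases i <;> fin_cases j <;> simp)

theorem owalk_localized_at_extremes (θ0 θ1 p : ℝ) (hp0 : 0 ≤ p) (hp1 : p ≤ 1)
    (hc0 : Real.cos θ0 = 0) (hs1 : Real.sin θ1 = 0) :
    ∀ t : ℕ, 1 ≤ t →
      findprob θ0 θ1 p t (t : ℤ) = p ∧
      findprob θ0 θ1 p t (-(t : ℤ)) = 1 - p ∧
      ∀ x : ℤ, x ≠ (t : ℤ) → x ≠ -(t : ℤ) → findprob θ0 θ1 p t x = 0 := by
  intro t ht
  have key := owalk_form θ0 θ1 p hc0 hs1 t ht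
  have htne : (t : ℤ) ≠ -(t : ℤ) := by omega
  refine ⟨?_, ?_, ?_⟩
  · rw [findprob, key (t : ℤ), if_pos rfl]
    simp [Matrix.trace, Fin.sum_univ_two]
  · rw [findprob, key (-(t : ℤ)), if_neg (Ne.symm htne), if_pos rfl]
    simp [Matrix.trace, Fin.sum_univ_two]
  · intro x hx1 hx2
    rw [findprob, key x, if_neg hx1, if_neg hx2]
    simp
end

section
/- Suppose sin θ0 · cos θ1 = 0 and cos θ0 ≠ sin θ0 · sin θ1. Then for every t ∈ ℕ the first moment satisfies: E₁(t) = 0 if t is even, and E₁(t) = (2p − 1)·(2·c0² − 1) if t is odd, where c0 = cos θ0. -/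
open Matrix Complex Filter

section OwalkAux
variable (θ0 θ1 p : ℝ)

lemma P00 (hs : Real.sin θ0 * Real.cos θ1 = 0) (ρ : Matrix (Fin 2) (Fin 2) ℂ) :
    (Pmat θ0 θ1 * ρ * (Pmat θ0 θ1)ᴴ) 0 0 = (Real.cos θ0 : ℂ)^2 * ρ 1 1 := by
  simp [Pmat, hs, Matrix.mul_apply, Fin.sum_univ_succ, conjTranspose_apply,
    Matrix.vecMul, dotProduct, ← Complex.ofReal_cos]
  ring

lemma P11 (hs : Real.sin θ0 * Real.cos θ1 = 0) (ρ : Matrix (Fin 2) (Fin 2) ℂ) :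
    (Pmat θ0 θ1 * ρ * (Pmat θ0 θ1)ᴴ) 1 1
      = ((Real.sin θ0 * Real.sin θ1 : ℝ) : ℂ)^2 * ρ 0 0 := by
  simp [Pmat, hs, Matrix.mul_apply, Fin.sum_univ_succ, conjTranspose_apply,
    Matrix.vecMul, dotProduct, ← Complex.ofReal_sin]
  ring

lemma Q00 (hs : Real.sin θ0 * Real.cos θ1 = 0) (ρ : Matrix (Fin 2) (Fin 2) ℂ) :
    (Qmat θ0 θ1 * ρ * (Qmat θ0 θ1)ᴴ) 0 0
      = ((Real.sin θ0 * Real.sin θ1 : ℝ) : ℂ)^2 * ρ 1 1 := by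
  simp [Qmat, hs, Matrix.mul_apply, Fin.sum_univ_succ, conjTranspose_apply,
    Matrix.vecMul, dotProduct, ← Complex.ofReal_sin]
  ring

lemma Q11 (hs : Real.sin θ0 * Real.cos θ1 = 0) (ρ : Matrix (Fin 2) (Fin 2) ℂ) :
    (Qmat θ0 θ1 * ρ * (Qmat θ0 θ1)ᴴ) 1 1 = (Real.cos θ0 : ℂ)^2 * ρ 0 0 := by
  simp [Qmat, hs, Matrix.mul_apply, Fin.sum_univ_succ, conjTranspose_apply,
    Matrix.vecMul, dotProduct, ← Complex.ofReal_cos]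
  ring

lemma owalk_supp : ∀ (t : ℕ) (x : ℤ), (t : ℤ) < |x| → owalk θ0 θ1 p t x = 0
  | 0, x, h => by
    have hx : x ≠ 0 := by rintro rfl; simp at h
    simp [owalk, hx]
  | t + 1, x, h => by
    have h' := lt_abs.mp h
    have h1 : (t : ℤ) < |x + 1| := lt_abs.mpr (by push_cast at h' ⊢; omega)
    have h2 : (t : ℤ) < |x - 1| := lt_abs.mpr (by push_cast at h' ⊢; omega)
    rw [owalk, owalk_supp t _ h1, owalk_supp t _ h2]
    simp

lemma sum_shift_s7 (t : ℕ) (c : ℤ) (hc : c = 1 ∨ c = -1) (F : ℤ → ℂ)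
    (hF : ∀ y : ℤ, (t : ℤ) < |y| → F y = 0) :
    ∑ x ∈ Finset.Icc (-(t : ℤ) - 1) ((t : ℤ) + 1), F (x + c)
      = ∑ y ∈ Finset.Icc (-(t : ℤ)) (t : ℤ), F y := by
  have : ∑ x ∈ Finset.Icc (-(t : ℤ) - 1) ((t : ℤ) + 1), F (x + c)
      = ∑ y ∈ Finset.Icc (-(t : ℤ) - 1 + c) ((t : ℤ) + 1 + c), F y := by
    rw [← Finset.map_add_right_Icc, Finset.sum_map]
    rfl
  rw [this]
  refine (Finset.sum_subset ?_ ?_).symm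
  · intro y hy
    simp only [Finset.mem_Icc] at hy ⊢
    rcases hc with rfl | rfl <;> omega
  · intro y hy hy'
    simp only [Finset.mem_Icc] at hy hy'
    refine hF y (lt_abs.mpr ?_)
    omega

lemma a_rec (hs : Real.sin θ0 * Real.cos θ1 = 0) (t : ℕ) (x : ℤ) :
    owalk θ0 θ1 p (t + 1) x 0 0
      = (Real.cos θ0 : ℂ)^2 * owalk θ0 θ1 p t (x + 1) 1 1
        + ((Real.sin θ0 * Real.sin θ1 : ℝ) : ℂ)^2 * owalk θ0 θ1 p t (x - 1) 1 1 := by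
  rw [owalk, Matrix.add_apply, P00 _ _ hs, Q00 _ _ hs]

lemma d_rec (hs : Real.sin θ0 * Real.cos θ1 = 0) (t : ℕ) (x : ℤ) :
    owalk θ0 θ1 p (t + 1) x 1 1
      = ((Real.sin θ0 * Real.sin θ1 : ℝ) : ℂ)^2 * owalk θ0 θ1 p t (x + 1) 0 0
        + (Real.cos θ0 : ℂ)^2 * owalk θ0 θ1 p t (x - 1) 0 0 := by
  rw [owalk, Matrix.add_apply, P11 _ _ hs, Q11 _ _ hs]

lemma key (hs : Real.sin θ0 * Real.cos θ1 = 0) : ∀ t : ℕ,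
    ((∑ x ∈ Finset.Icc (-(t : ℤ)) (t : ℤ), owalk θ0 θ1 p t x 0 0)
        - ∑ x ∈ Finset.Icc (-(t : ℤ)) (t : ℤ), owalk θ0 θ1 p t x 1 1)
      = (-1 : ℂ)^t * ((2 * p - 1 : ℝ) : ℂ)
    ∧ (∑ x ∈ Finset.Icc (-(t : ℤ)) (t : ℤ), (x : ℂ) * (owalk θ0 θ1 p t x).trace)
      = if Even t then 0 else (((2 * p - 1) * (2 * Real.cos θ0 ^ 2 - 1) : ℝ) : ℂ) := by
  set C : ℂ := (Real.cos θ0 : ℂ) with hC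
  set B : ℂ := ((Real.sin θ0 * Real.sin θ1 : ℝ) : ℂ) with hB
  have hCB : C ^ 2 + B ^ 2 = 1 := by
    have h : (Real.cos θ0) ^ 2 + (Real.sin θ0 * Real.sin θ1) ^ 2 = 1 := by
      nlinarith [Real.sin_sq_add_cos_sq θ0, Real.sin_sq_add_cos_sq θ1, hs]
    rw [hC, hB]
    exact_mod_cast congrArg (Complex.ofReal) h
  have hm : C ^ 2 - B ^ 2 = ((2 * Real.cos θ0 ^ 2 - 1 : ℝ) : ℂ) := by
    have : B ^ 2 = 1 - C ^ 2 := by linear_combination hCB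
    rw [this, hC]; push_cast; ring
  intro t
  induction t with
  | zero =>
    constructor
    · simp [owalk, Matrix.diagonal]
      push_cast; ring
    · simp [owalk]
  | succ t ih =>
    obtain ⟨ihAD, ihE⟩ := ih
    have hIcc : Finset.Icc (-((t + 1 : ℕ) : ℤ)) (((t + 1 : ℕ)) : ℤ)
        = Finset.Icc (-(t : ℤ) - 1) ((t : ℤ) + 1) := by
      congr 1 <;> push_cast <;> ring
    have hA : ∑ x ∈ Finset.Icc (-((t + 1 : ℕ) : ℤ)) (((t + 1 : ℕ)) : ℤ),
        owalk θ0 θ1 p (t + 1) x 0 0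
        = ∑ y ∈ Finset.Icc (-(t : ℤ)) (t : ℤ),
            (C ^ 2 * owalk θ0 θ1 p t y 1 1 + B ^ 2 * owalk θ0 θ1 p t y 1 1) := by
      rw [hIcc]
      have h1 := sum_shift_s7 t 1 (Or.inl rfl)
        (fun y => C ^ 2 * owalk θ0 θ1 p t y 1 1)
        (fun y hy => by simp [owalk_supp θ0 θ1 p t y hy])
      have h2 := sum_shift_s7 t (-1) (Or.inr rfl)
        (fun y => B ^ 2 * owalk θ0 θ1 p t y 1 1)
        (fun y hy => by simp [owalk_supp θ0 θ1 p t y hy])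
      calc ∑ x ∈ Finset.Icc (-(t : ℤ) - 1) ((t : ℤ) + 1), owalk θ0 θ1 p (t + 1) x 0 0
          = ∑ x ∈ Finset.Icc (-(t : ℤ) - 1) ((t : ℤ) + 1),
              (C ^ 2 * owalk θ0 θ1 p t (x + 1) 1 1
                + B ^ 2 * owalk θ0 θ1 p t (x + (-1)) 1 1) := by
            refine Finset.sum_congr rfl fun x _ => ?_
            rw [show x + (-1) = x - 1 by ring]
            exact a_rec θ0 θ1 p hs t x
        _ = _ := by rw [Finset.sum_add_distrib, h1, h2, ← Finset.sum_add_distrib]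
    have hD : ∑ x ∈ Finset.Icc (-((t + 1 : ℕ) : ℤ)) (((t + 1 : ℕ)) : ℤ),
        owalk θ0 θ1 p (t + 1) x 1 1
        = ∑ y ∈ Finset.Icc (-(t : ℤ)) (t : ℤ),
            (B ^ 2 * owalk θ0 θ1 p t y 0 0 + C ^ 2 * owalk θ0 θ1 p t y 0 0) := by
      rw [hIcc]
      have h1 := sum_shift_s7 t 1 (Or.inl rfl)
        (fun y => B ^ 2 * owalk θ0 θ1 p t y 0 0)
        (fun y hy => by simp [owalk_supp θ0 θ1 p t y hy])
      have h2 := sum_shift_s7 t (-1) (Or.inr rfl)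
        (fun y => C ^ 2 * owalk θ0 θ1 p t y 0 0)
        (fun y hy => by simp [owalk_supp θ0 θ1 p t y hy])
      calc ∑ x ∈ Finset.Icc (-(t : ℤ) - 1) ((t : ℤ) + 1), owalk θ0 θ1 p (t + 1) x 1 1
          = ∑ x ∈ Finset.Icc (-(t : ℤ) - 1) ((t : ℤ) + 1),
              (B ^ 2 * owalk θ0 θ1 p t (x + 1) 0 0
                + C ^ 2 * owalk θ0 θ1 p t (x + (-1)) 0 0) := by
            refine Finset.sum_congr rfl fun x _ => ?_
            rw [show x + (-1) = x - 1 by ring]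
            exact d_rec θ0 θ1 p hs t x
        _ = _ := by rw [Finset.sum_add_distrib, h1, h2, ← Finset.sum_add_distrib]
    have hE : ∑ x ∈ Finset.Icc (-((t + 1 : ℕ) : ℤ)) (((t + 1 : ℕ)) : ℤ),
        (x : ℂ) * (owalk θ0 θ1 p (t + 1) x).trace
        = (∑ x ∈ Finset.Icc (-(t : ℤ)) (t : ℤ), (x : ℂ) * (owalk θ0 θ1 p t x).trace)
          + (C ^ 2 - B ^ 2)
            * ((∑ x ∈ Finset.Icc (-(t : ℤ)) (t : ℤ), owalk θ0 θ1 p t x 0 0)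
                - ∑ x ∈ Finset.Icc (-(t : ℤ)) (t : ℤ), owalk θ0 θ1 p t x 1 1) := by
      rw [hIcc]
      have h1 := sum_shift_s7 t 1 (Or.inl rfl)
        (fun y => ((y : ℂ) - 1) * (C ^ 2 * owalk θ0 θ1 p t y 1 1
          + B ^ 2 * owalk θ0 θ1 p t y 0 0))
        (fun y hy => by simp [owalk_supp θ0 θ1 p t y hy])
      have h2 := sum_shift_s7 t (-1) (Or.inr rfl)
        (fun y => ((y : ℂ) + 1) * (B ^ 2 * owalk θ0 θ1 p t y 1 1
          + C ^ 2 * owalk θ0 θ1 p t y 0 0))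
        (fun y hy => by simp [owalk_supp θ0 θ1 p t y hy])
      calc ∑ x ∈ Finset.Icc (-(t : ℤ) - 1) ((t : ℤ) + 1),
            (x : ℂ) * (owalk θ0 θ1 p (t + 1) x).trace
          = ∑ x ∈ Finset.Icc (-(t : ℤ) - 1) ((t : ℤ) + 1),
              ((((x + 1 : ℤ) : ℂ) - 1) * (C ^ 2 * owalk θ0 θ1 p t (x + 1) 1 1
                  + B ^ 2 * owalk θ0 θ1 p t (x + 1) 0 0)
                + (((x + (-1) : ℤ) : ℂ) + 1) * (B ^ 2 * owalk θ0 θ1 p t (x + (-1)) 1 1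
                  + C ^ 2 * owalk θ0 θ1 p t (x + (-1)) 0 0)) := by
            refine Finset.sum_congr rfl fun x _ => ?_
            rw [show x + (-1) = x - 1 by ring, Matrix.trace_fin_two,
              a_rec θ0 θ1 p hs t x, d_rec θ0 θ1 p hs t x,
              show ((x + 1 : ℤ) : ℂ) = (x : ℂ) + 1 by push_cast; ring,
              show ((x - 1 : ℤ) : ℂ) = (x : ℂ) - 1 by push_cast; ring,
              ← hC, ← hB]
            ring
        _ = (∑ y ∈ Finset.Icc (-(t : ℤ)) (t : ℤ),
              ((y : ℂ) - 1) * (C ^ 2 * owalk θ0 θ1 p t y 1 1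
                + B ^ 2 * owalk θ0 θ1 p t y 0 0))
            + ∑ y ∈ Finset.Icc (-(t : ℤ)) (t : ℤ),
              ((y : ℂ) + 1) * (B ^ 2 * owalk θ0 θ1 p t y 1 1
                + C ^ 2 * owalk θ0 θ1 p t y 0 0) := by
            rw [Finset.sum_add_distrib, h1, h2]
        _ = _ := by
            rw [← Finset.sum_add_distrib, ← Finset.sum_sub_distrib, Finset.mul_sum,
              ← Finset.sum_add_distrib]
            refine Finset.sum_congr rfl fun y _ => ?_
            rw [Matrix.trace_fin_two]
            linear_combination ((y : ℂ) * (owalk θ0 θ1 p t y 0 0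
              + owalk θ0 θ1 p t y 1 1)) * hCB
    refine ⟨?_, ?_⟩
    · rw [hA, hD, ← Finset.sum_sub_distrib]
      have : ∑ y ∈ Finset.Icc (-(t : ℤ)) (t : ℤ),
          ((C ^ 2 * owalk θ0 θ1 p t y 1 1 + B ^ 2 * owalk θ0 θ1 p t y 1 1)
            - (B ^ 2 * owalk θ0 θ1 p t y 0 0 + C ^ 2 * owalk θ0 θ1 p t y 0 0))
          = ∑ y ∈ Finset.Icc (-(t : ℤ)) (t : ℤ),
              (owalk θ0 θ1 p t y 1 1 - owalk θ0 θ1 p t y 0 0) := by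
        refine Finset.sum_congr rfl fun y _ => ?_
        linear_combination (owalk θ0 θ1 p t y 1 1 - owalk θ0 θ1 p t y 0 0) * hCB
      rw [this, Finset.sum_sub_distrib, pow_succ]
      linear_combination (-1 : ℂ) * ihAD
    · rw [hE, ihAD, hm]
      rcases Nat.even_or_odd t with he | ho
      · rw [if_pos he] at ihE
        rw [ihE, if_neg (by rw [Nat.even_add_one]; exact fun h => h he),
          Even.neg_one_pow he]
        push_cast; ring
      · rw [if_neg (Nat.not_even_iff_odd.mpr ho)] at ihE
        rw [ihE, if_pos (Nat.even_add_one.mpr (Nat.not_even_iff_odd.mpr ho)),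
          Odd.neg_one_pow ho]
        push_cast; ring

end OwalkAux

theorem owalk_moment1_parity (θ0 θ1 p : ℝ) (hp0 : 0 ≤ p) (hp1 : p ≤ 1)
    (hs : Real.sin θ0 * Real.cos θ1 = 0)
    (hne : Real.cos θ0 ≠ Real.sin θ0 * Real.sin θ1) :
    ∀ t : ℕ,
      (Even t → moment1 θ0 θ1 p t = 0) ∧
      (Odd t → moment1 θ0 θ1 p t = (2 * p - 1) * (2 * Real.cos θ0 ^ 2 - 1)) := by
  intro t
  have hk := (key θ0 θ1 p hs t).2
  have hre : moment1 θ0 θ1 p t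
      = (∑ x ∈ Finset.Icc (-(t : ℤ)) (t : ℤ), (x : ℂ) * (owalk θ0 θ1 p t x).trace).re := by
    rw [Complex.re_sum, moment1]
    refine Finset.sum_congr rfl fun x _ => ?_
    rw [findprob, Complex.mul_re]
    simp
  constructor
  · intro he
    rw [hre, hk, if_pos he, Complex.zero_re]
  · intro ho
    rw [hre, hk, if_neg (Nat.not_even_iff_odd.mpr ho), Complex.ofReal_re]
end

section
/- Suppose cos θ0 = 0, sin θ1 ≠ 0 and cos θ1 ≠ 0. Then the sequence E₂(t) − (c1²/s1²)·t converges, as t → ∞, to −(1 − 2·s1²)/(2·s1⁴), where c1 = cos θ1 and s1 = sin θ1. -/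
open Matrix Complex Filter

/-! ### Auxiliary real-valued walk -/

/-- Real scalar version of the walk when `cos θ0 = 0`: the state at each site is diagonal
`diag(a, b)`, and `(a, b)` evolve by a correlated random walk with parameters `c = cos² θ1`,
`s = sin² θ1`. -/
noncomputable def wk (c s p : ℝ) : ℕ → ℤ → ℝ × ℝ
  | 0, x => if x = 0 then (p, 1 - p) else (0, 0)
  | t + 1, x =>
      (c * (wk c s p t (x - 1)).1 + s * (wk c s p t (x - 1)).2,
       s * (wk c s p t (x + 1)).1 + c * (wk c s p t (x + 1)).2)

lemma wk_vanish (c s p : ℝ) : ∀ (t : ℕ) (x : ℤ), (t : ℤ) < |x| → wk c s p t x = (0, 0) := by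
  intro t
  induction t with
  | zero =>
    intro x hx; rw [lt_abs] at hx
    rw [wk, if_neg (by omega : ¬ x = 0)]
  | succ t ih =>
    intro x hx; rw [lt_abs] at hx
    rw [wk, ih (x - 1) (by rw [lt_abs]; omega),
      ih (x + 1) (by rw [lt_abs]; omega)]
    simp

lemma sum_shift_up (t : ℕ) (w F : ℤ → ℝ)
    (hF : ∀ y : ℤ, (t : ℤ) < |y| → F y = 0) :
    ∑ x ∈ Finset.Icc (-(t + 1 : ℤ)) (t + 1), w x * F (x + 1)
      = ∑ y ∈ Finset.Icc (-(t : ℤ)) t, w (y - 1) * F y := by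
  rw [← Finset.sum_subset (Finset.Icc_subset_Icc (by omega : (-(t + 1 : ℤ)) ≤ -t - 1)
      (by omega : (t - 1 : ℤ) ≤ t + 1))
      (fun x _ hx => by
        rw [hF (x + 1) (by rw [Finset.mem_Icc] at hx; rw [lt_abs]; omega), mul_zero])]
  apply Finset.sum_nbij' (fun x => x + 1) (fun y => y - 1)
  · intro a ha; simp only [Finset.mem_Icc] at *; omega
  · intro a ha; simp only [Finset.mem_Icc] at *; omega
  · intro a _; ring
  · intro a _; ring
  · intro a _; rw [add_sub_cancel_right]

lemma sum_shift_down (t : ℕ) (w F : ℤ → ℝ)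
    (hF : ∀ y : ℤ, (t : ℤ) < |y| → F y = 0) :
    ∑ x ∈ Finset.Icc (-(t + 1 : ℤ)) (t + 1), w x * F (x - 1)
      = ∑ y ∈ Finset.Icc (-(t : ℤ)) t, w (y + 1) * F y := by
  rw [← Finset.sum_subset (Finset.Icc_subset_Icc (by omega : (-(t + 1 : ℤ)) ≤ -t + 1)
      (by omega : (t + 1 : ℤ) ≤ t + 1))
      (fun x _ hx => by
        rw [hF (x - 1) (by rw [Finset.mem_Icc] at hx; rw [lt_abs]; omega), mul_zero])]
  apply Finset.sum_nbij' (fun x => x - 1) (fun y => y + 1)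
  · intro a ha; simp only [Finset.mem_Icc] at *; omega
  · intro a ha; simp only [Finset.mem_Icc] at *; omega
  · intro a _; ring
  · intro a _; ring
  · intro a _; rw [sub_add_cancel]

/-! ### Matrix representation -/

lemma PDP (k1 k2 a b : ℝ) :
    !![0, 0; (k1 : ℂ), (k2 : ℂ)] * !![(a : ℂ), 0; 0, (b : ℂ)] * (!![0, 0; (k1 : ℂ), (k2 : ℂ)])ᴴ
      = !![0, 0; 0, ((k1 ^ 2 * a + k2 ^ 2 * b : ℝ) : ℂ)] := by
  have hT : (!![0, 0; (k1 : ℂ), (k2 : ℂ)])ᴴ = !![0, (k1 : ℂ); 0, (k2 : ℂ)] := by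
    ext i j; fin_cases i <;> fin_cases j <;> simp [Matrix.conjTranspose_apply]
  rw [hT, Matrix.mul_fin_two, Matrix.mul_fin_two]
  push_cast; ring_nf

lemma QDQ (k1 k2 a b : ℝ) :
    !![(k1 : ℂ), (k2 : ℂ); 0, 0] * !![(a : ℂ), 0; 0, (b : ℂ)] * (!![(k1 : ℂ), (k2 : ℂ); 0, 0])ᴴ
      = !![((k1 ^ 2 * a + k2 ^ 2 * b : ℝ) : ℂ), 0; 0, 0] := by
  have hT : (!![(k1 : ℂ), (k2 : ℂ); 0, 0])ᴴ = !![(k1 : ℂ), 0; (k2 : ℂ), 0] := by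
    ext i j; fin_cases i <;> fin_cases j <;> simp [Matrix.conjTranspose_apply]
  rw [hT, Matrix.mul_fin_two, Matrix.mul_fin_two]
  push_cast; ring_nf

lemma owalk_eq (θ0 θ1 p : ℝ) (hc0 : Real.cos θ0 = 0) (t : ℕ) (x : ℤ) :
    owalk θ0 θ1 p t x =
      !![(((wk (Real.cos θ1 ^ 2) (Real.sin θ1 ^ 2) p t x).1 : ℝ) : ℂ), 0;
         0, (((wk (Real.cos θ1 ^ 2) (Real.sin θ1 ^ 2) p t x).2 : ℝ) : ℂ)] := by
  have hσ : Real.sin θ0 ^ 2 = 1 := by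
    have := Real.sin_sq_add_cos_sq θ0; rw [hc0] at this; linarith
  have hP : Pmat θ0 θ1 = !![0, 0; ((Real.sin θ0 * Real.sin θ1 : ℝ) : ℂ),
      ((-(Real.sin θ0 * Real.cos θ1) : ℝ) : ℂ)] := by
    simp [Pmat, hc0]
  have hQ : Qmat θ0 θ1 = !![((Real.sin θ0 * Real.cos θ1 : ℝ) : ℂ),
      ((Real.sin θ0 * Real.sin θ1 : ℝ) : ℂ); 0, 0] := by
    simp [Qmat, hc0]
  induction t generalizing x with
  | zero =>
    by_cases hx : x = 0 <;> ext i j <;> fin_cases i <;> fin_cases j <;>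
      simp [owalk, wk, hx, Matrix.diagonal]
  | succ t ih =>
    rw [owalk, ih, ih, hP, hQ, PDP, QDQ]
    have e1 : (Real.sin θ0 * Real.sin θ1) ^ 2 = Real.sin θ1 ^ 2 := by nlinarith [hσ]
    have e2 : (-(Real.sin θ0 * Real.cos θ1)) ^ 2 = Real.cos θ1 ^ 2 := by nlinarith [hσ]
    have e3 : (Real.sin θ0 * Real.cos θ1) ^ 2 = Real.cos θ1 ^ 2 := by nlinarith [hσ]
    rw [e1, e2, e3]
    show _ = !![((wk _ _ p (t+1) x).1 : ℂ), 0; 0, ((wk _ _ p (t+1) x).2 : ℂ)]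
    simp only [wk]
    ext i j; fin_cases i <;> fin_cases j <;> simp

lemma findprob_eq (θ0 θ1 p : ℝ) (hc0 : Real.cos θ0 = 0) (t : ℕ) (x : ℤ) :
    findprob θ0 θ1 p t x =
      (wk (Real.cos θ1 ^ 2) (Real.sin θ1 ^ 2) p t x).1
        + (wk (Real.cos θ1 ^ 2) (Real.sin θ1 ^ 2) p t x).2 := by
  rw [findprob, owalk_eq θ0 θ1 p hc0 t x, Matrix.trace_fin_two]
  simp

/-! ### Moment recursions -/

noncomputable def Tt (c s p : ℝ) (t : ℕ) : ℝ :=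
  ∑ x ∈ Finset.Icc (-(t : ℤ)) (t : ℤ), ((wk c s p t x).1 + (wk c s p t x).2)

noncomputable def Dt (c s p : ℝ) (t : ℕ) : ℝ :=
  ∑ x ∈ Finset.Icc (-(t : ℤ)) (t : ℤ), (x : ℝ) * ((wk c s p t x).1 - (wk c s p t x).2)

noncomputable def Et (c s p : ℝ) (t : ℕ) : ℝ :=
  ∑ x ∈ Finset.Icc (-(t : ℤ)) (t : ℤ), (x : ℝ) ^ 2 * ((wk c s p t x).1 + (wk c s p t x).2)

section
variable (c s p : ℝ)

lemma sum_fst (t : ℕ) (w : ℤ → ℝ) :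
    ∑ x ∈ Finset.Icc (-(t + 1 : ℤ)) (t + 1), w x * (wk c s p (t + 1) x).1
      = ∑ y ∈ Finset.Icc (-(t : ℤ)) t,
          w (y + 1) * (c * (wk c s p t y).1 + s * (wk c s p t y).2) := by
  simp only [wk]
  exact sum_shift_down t w (fun y => c * (wk c s p t y).1 + s * (wk c s p t y).2)
    (fun y hy => by simp [wk_vanish c s p t y hy])

lemma sum_snd (t : ℕ) (w : ℤ → ℝ) :
    ∑ x ∈ Finset.Icc (-(t + 1 : ℤ)) (t + 1), w x * (wk c s p (t + 1) x).2
      = ∑ y ∈ Finset.Icc (-(t : ℤ)) t,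
          w (y - 1) * (s * (wk c s p t y).1 + c * (wk c s p t y).2) := by
  simp only [wk]
  exact sum_shift_up t w (fun y => s * (wk c s p t y).1 + c * (wk c s p t y).2)
    (fun y hy => by simp [wk_vanish c s p t y hy])

lemma cast_succ_Icc (t : ℕ) :
    Finset.Icc (-((t + 1 : ℕ) : ℤ)) ((t + 1 : ℕ) : ℤ)
      = Finset.Icc (-(t + 1 : ℤ)) ((t : ℤ) + 1) := by
  push_cast; rfl

lemma Tt_succ (hcs : c + s = 1) (t : ℕ) : Tt c s p (t + 1) = Tt c s p t := by
  rw [Tt, cast_succ_Icc]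
  calc ∑ x ∈ Finset.Icc (-(t + 1 : ℤ)) ((t : ℤ) + 1),
        ((wk c s p (t+1) x).1 + (wk c s p (t+1) x).2)
      = (∑ x ∈ Finset.Icc (-(t + 1 : ℤ)) ((t : ℤ) + 1), (fun _ => (1:ℝ)) x * (wk c s p (t+1) x).1)
        + ∑ x ∈ Finset.Icc (-(t + 1 : ℤ)) ((t : ℤ) + 1), (fun _ => (1:ℝ)) x * (wk c s p (t+1) x).2 := by
        rw [← Finset.sum_add_distrib]; apply Finset.sum_congr rfl; intros; ring
    _ = ∑ y ∈ Finset.Icc (-(t : ℤ)) t,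
          (c + s) * ((wk c s p t y).1 + (wk c s p t y).2) := by
        rw [sum_fst c s p t, sum_snd c s p t, ← Finset.sum_add_distrib]
        apply Finset.sum_congr rfl; intros; ring
    _ = Tt c s p t := by
        rw [← Finset.mul_sum, hcs, one_mul, Tt]

lemma Dt_succ (hcs : c + s = 1) (t : ℕ) :
    Dt c s p (t + 1) = (c - s) * Dt c s p t + Tt c s p t := by
  rw [Dt, cast_succ_Icc]
  calc ∑ x ∈ Finset.Icc (-(t + 1 : ℤ)) ((t : ℤ) + 1),
        (x : ℝ) * ((wk c s p (t+1) x).1 - (wk c s p (t+1) x).2)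
      = (∑ x ∈ Finset.Icc (-(t + 1 : ℤ)) ((t : ℤ) + 1), (fun z : ℤ => (z:ℝ)) x * (wk c s p (t+1) x).1)
        - ∑ x ∈ Finset.Icc (-(t + 1 : ℤ)) ((t : ℤ) + 1), (fun z : ℤ => (z:ℝ)) x * (wk c s p (t+1) x).2 := by
        rw [← Finset.sum_sub_distrib]; apply Finset.sum_congr rfl; intros; ring
    _ = ∑ y ∈ Finset.Icc (-(t : ℤ)) t,
          ((c - s) * ((y:ℝ) * ((wk c s p t y).1 - (wk c s p t y).2))
            + (c + s) * ((wk c s p t y).1 + (wk c s p t y).2)) := by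
        rw [sum_fst c s p t, sum_snd c s p t, ← Finset.sum_sub_distrib]
        apply Finset.sum_congr rfl; intros; push_cast; ring
    _ = (c - s) * Dt c s p t + (c + s) * Tt c s p t := by
        rw [Finset.sum_add_distrib, ← Finset.mul_sum, ← Finset.mul_sum, Dt, Tt]
    _ = (c - s) * Dt c s p t + Tt c s p t := by rw [hcs, one_mul]

lemma Et_succ (hcs : c + s = 1) (t : ℕ) :
    Et c s p (t + 1) = Et c s p t + 2 * (c - s) * Dt c s p t + Tt c s p t := by
  rw [Et, cast_succ_Icc]
  calc ∑ x ∈ Finset.Icc (-(t + 1 : ℤ)) ((t : ℤ) + 1),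
        (x : ℝ) ^ 2 * ((wk c s p (t+1) x).1 + (wk c s p (t+1) x).2)
      = (∑ x ∈ Finset.Icc (-(t + 1 : ℤ)) ((t : ℤ) + 1), (fun z : ℤ => (z:ℝ)^2) x * (wk c s p (t+1) x).1)
        + ∑ x ∈ Finset.Icc (-(t + 1 : ℤ)) ((t : ℤ) + 1), (fun z : ℤ => (z:ℝ)^2) x * (wk c s p (t+1) x).2 := by
        rw [← Finset.sum_add_distrib]; apply Finset.sum_congr rfl; intros; ring
    _ = ∑ y ∈ Finset.Icc (-(t : ℤ)) t,
          ((c + s) * ((y:ℝ)^2 * ((wk c s p t y).1 + (wk c s p t y).2))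
            + 2 * (c - s) * ((y:ℝ) * ((wk c s p t y).1 - (wk c s p t y).2))
            + (c + s) * ((wk c s p t y).1 + (wk c s p t y).2)) := by
        rw [sum_fst c s p t, sum_snd c s p t, ← Finset.sum_add_distrib]
        apply Finset.sum_congr rfl; intros; push_cast; ring
    _ = (c + s) * Et c s p t + 2 * (c - s) * Dt c s p t + (c + s) * Tt c s p t := by
        rw [Finset.sum_add_distrib, Finset.sum_add_distrib, ← Finset.mul_sum, ← Finset.mul_sum,
          ← Finset.mul_sum, Et, Dt, Tt]
    _ = Et c s p t + 2 * (c - s) * Dt c s p t + Tt c s p t := by rw [hcs, one_mul, one_mul]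

lemma Tt_one (hcs : c + s = 1) : ∀ t, Tt c s p t = 1 := by
  intro t; induction t with
  | zero => simp [Tt, wk]
  | succ t ih => rw [Tt_succ c s p hcs, ih]

lemma DE_formula (hcs : c + s = 1) (hs : s ≠ 0) : ∀ t : ℕ,
    Dt c s p t = (1 - (c - s) ^ t) / (2 * s) ∧
    Et c s p t = c / s * t - (c - s) * (1 - (c - s) ^ t) / (2 * s ^ 2) := by
  intro t; induction t with
  | zero => simp [Dt, Et, wk]
  | succ t ih =>
    obtain ⟨hD, hE⟩ := ih
    constructor
    · rw [Dt_succ c s p hcs, Tt_one c s p hcs, hD, pow_succ]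
      have : c = 1 - s := by linarith
      field_simp [this]; rw [this]; ring
    · rw [Et_succ c s p hcs, Tt_one c s p hcs, hD, hE, pow_succ]
      have : c = 1 - s := by linarith
      push_cast
      field_simp [this]; rw [this]; ring

end

lemma moment2_eq_s11 (θ0 θ1 p : ℝ) (hc0 : Real.cos θ0 = 0) (t : ℕ) :
    moment2 θ0 θ1 p t = Et (Real.cos θ1 ^ 2) (Real.sin θ1 ^ 2) p t := by
  rw [moment2, Et]
  exact Finset.sum_congr rfl fun x _ => by rw [findprob_eq θ0 θ1 p hc0]

theorem owalk_moment2_asymp_c0_zero (θ0 θ1 p : ℝ) (hp0 : 0 ≤ p) (hp1 : p ≤ 1)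
    (hc0 : Real.cos θ0 = 0) (hs1 : Real.sin θ1 ≠ 0) (hc1 : Real.cos θ1 ≠ 0) :
    Filter.Tendsto
      (fun t : ℕ => moment2 θ0 θ1 p t - Real.cos θ1 ^ 2 / Real.sin θ1 ^ 2 * t)
      Filter.atTop (nhds (-((1 - 2 * Real.sin θ1 ^ 2) / (2 * Real.sin θ1 ^ 4)))) := by
  set c := Real.cos θ1 ^ 2 with hc
  set s := Real.sin θ1 ^ 2 with hsdef
  have hcs : c + s = 1 := by
    have := Real.sin_sq_add_cos_sq θ1; rw [hc, hsdef]; linarith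
  have hspos : 0 < s := by positivity
  have hcpos : 0 < c := by positivity
  have hs : s ≠ 0 := ne_of_gt hspos
  set K : ℝ := (c - s) / (2 * s ^ 2) with hK
  have hfun : ∀ t : ℕ, moment2 θ0 θ1 p t - c / s * t = -K + K * (c - s) ^ t := by
    intro t
    rw [moment2_eq_s11 θ0 θ1 p hc0 t, (DE_formula c s p hcs hs t).2, hK]
    field_simp
    ring
  have hval : -((1 - 2 * Real.sin θ1 ^ 2) / (2 * Real.sin θ1 ^ 4)) = -K := by
    rw [hK, hc, hsdef]
    have h4 : Real.sin θ1 ^ 4 = (Real.sin θ1 ^ 2) ^ 2 := by ring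
    rw [h4]
    congr 1
    have : Real.cos θ1 ^ 2 = 1 - Real.sin θ1 ^ 2 := by
      have := Real.sin_sq_add_cos_sq θ1; linarith
    rw [this]; ring_nf
  have habs : |c - s| < 1 := by
    rw [abs_lt]; constructor <;> nlinarith
  have hlim : Filter.Tendsto (fun t : ℕ => -K + K * (c - s) ^ t) Filter.atTop (nhds (-K)) := by
    have h0 : Filter.Tendsto (fun t : ℕ => (c - s) ^ t) Filter.atTop (nhds 0) :=
      tendsto_pow_atTop_nhds_zero_of_abs_lt_one habs
    have := (h0.const_mul K).const_add (-K)
    simpa using this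
  rw [hval]
  exact hlim.congr fun t => (hfun t).symm
end
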